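/- arXiv:2605.01919 — 6 statements merged into one kernel-verified Lean document; each statement's English description precedes it below -/
import Mathlib

section
/- Let d ≥ 1 and let (p₁, s₁), …, (pₙ, sₙ) be a finite family of signed distance samples in ℝ^d. If the family is realizable, then it is geometrically consistent: (i) for all i, j with sᵢ > 0 > sⱼ the open balls B̊(pᵢ, |sᵢ|) and B̊(pⱼ, |sⱼ|) are disjoint, and (ii) for every i there exists a point q with ‖q − pᵢ‖ = |sᵢ| and ‖q − pⱼ‖ ≥ |sⱼ| for all j ≠ i. -/
open Classical in
/-- A finite family of signed distance samples `(p i, s i)` in `ℝ^d` is *realizable*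
(a valid discrete SDF) if there is a closed set `Z ⊆ ℝ^d` with nonempty frontier `Ω = ∂Z`
such that each `s i` is the signed distance from `p i` to `Ω` (negative inside `Z`). -/
def Realizable {d : ℕ} {ι : Type} (p : ι → EuclideanSpace ℝ (Fin d)) (s : ι → ℝ) : Prop :=
  ∃ Z : Set (EuclideanSpace ℝ (Fin d)), IsClosed Z ∧ (frontier Z).Nonempty ∧
    ∀ i, s i = if p i ∈ Z then -Metric.infDist (p i) (frontier Z)
               else Metric.infDist (p i) (frontier Z)

/-- A family of signed distance samples is *geometrically consistent* if
(i) the open balls of differently signed samples are disjoint, and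
(ii) every sphere has an uncovered point. -/
def GeomConsistent {d : ℕ} {ι : Type} (p : ι → EuclideanSpace ℝ (Fin d)) (s : ι → ℝ) : Prop :=
  (∀ i j, 0 < s i → s j < 0 →
      Disjoint (Metric.ball (p i) |s i|) (Metric.ball (p j) |s j|)) ∧
  (∀ i, ∃ q : EuclideanSpace ℝ (Fin d),
      dist q (p i) = |s i| ∧ ∀ j, j ≠ i → |s j| ≤ dist q (p j))

/-- If a finite family of signed distance samples in `ℝ^d` (`d ≥ 1`) is realizable,
then it is geometrically consistent. -/
theorem realizable_imp_geomConsistent (d : ℕ) (hd : 1 ≤ d) (n : ℕ)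
    (p : Fin n → EuclideanSpace ℝ (Fin d)) (s : Fin n → ℝ)
    (h : Realizable p s) : GeomConsistent p s := by
  obtain ⟨Z, hZc, hΩne, hs⟩ := h
  set Ω := frontier Z with hΩdef
  have hΩclosed : IsClosed Ω := isClosed_frontier
  have habs : ∀ k, |s k| = Metric.infDist (p k) Ω := by
    intro k
    rw [hs k]
    split
    · rw [abs_neg, abs_of_nonneg Metric.infDist_nonneg]
    · rw [abs_of_nonneg Metric.infDist_nonneg]
  have hcomplΩ : Ωᶜ = (closure Z)ᶜ ∪ interior Z := by
    ext x
    simp only [hΩdef, frontier, Set.mem_diff, Set.mem_compl_iff, Set.mem_union]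
    tauto
  constructor
  · intro i j hi hj
    have hpi : p i ∉ Z := by
      intro hmem
      have hsi := hs i
      rw [if_pos hmem] at hsi
      have : s i ≤ 0 := hsi ▸ neg_nonpos.2 Metric.infDist_nonneg
      linarith
    have hpj : p j ∈ Z := by
      by_contra hmem
      have hsj := hs j
      rw [if_neg hmem] at hsj
      have : (0:ℝ) ≤ s j := hsj ▸ Metric.infDist_nonneg
      linarith
    -- each ball misses Ω
    have hball : ∀ k, Metric.ball (p k) |s k| ⊆ Ωᶜ := by
      intro k x hx hxΩ
      rw [Metric.mem_ball, habs k] at hx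
      have := Metric.infDist_le_dist_of_mem (x := p k) hxΩ
      rw [dist_comm] at this
      linarith
    have hOpenU : IsOpen ((closure Z)ᶜ) := isClosed_closure.isOpen_compl
    have hOpenV : IsOpen (interior Z) := isOpen_interior
    have hdisj : Disjoint ((closure Z)ᶜ) (interior Z) :=
      Set.disjoint_left.2 fun x hx hx' => hx (subset_closure (interior_subset hx'))
    have hconn : ∀ k, IsPreconnected (Metric.ball (p k) |s k|) :=
      fun k => (convex_ball (p k) |s k|).isPreconnected
    have hsubU : Metric.ball (p i) |s i| ⊆ (closure Z)ᶜ := by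
      apply (hconn i).subset_left_of_subset_union hOpenU hOpenV hdisj
        (by rw [← hcomplΩ]; exact hball i)
      refine ⟨p i, Metric.mem_ball_self (abs_pos.2 (ne_of_gt hi)), ?_⟩
      rw [hZc.closure_eq]; exact hpi
    have hsubV : Metric.ball (p j) |s j| ⊆ interior Z := by
      apply (hconn j).subset_right_of_subset_union hOpenU hOpenV hdisj
        (by rw [← hcomplΩ]; exact hball j)
      refine ⟨p j, Metric.mem_ball_self (abs_pos.2 (ne_of_lt hj)), ?_⟩
      have hpjΩ : p j ∉ Ω := by
        intro hmem
        have : Metric.infDist (p j) Ω = 0 := Metric.infDist_zero_of_mem hmem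
        have := habs j
        rw [this] at *
        have : |s j| > 0 := abs_pos.2 (ne_of_lt hj)
        linarith [habs j, Metric.infDist_zero_of_mem hmem]
      have hcl : p j ∈ closure Z := subset_closure hpj
      by_contra hint
      exact hpjΩ ⟨hcl, hint⟩
    exact Set.disjoint_of_subset hsubU hsubV hdisj
  · intro i
    obtain ⟨q, hqΩ, hq⟩ := hΩclosed.exists_infDist_eq_dist hΩne (p i)
    refine ⟨q, ?_, fun j _ => ?_⟩
    · rw [dist_comm, habs i, hq]
    · rw [habs j, dist_comm]
      exact Metric.infDist_le_dist_of_mem hqΩ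
end

section
/- Let (p₁, s₁), …, (pₙ, sₙ) be a geometrically consistent finite family of signed distance samples in ℝ², and let p ∈ ℝ² with p ≠ pᵢ for all i. Define the finite candidate set P = {p} ∪ T ∪ U, where T = { pᵢ + ε·|sᵢ|·(p − pᵢ)/‖p − pᵢ‖ : 1 ≤ i ≤ n, ε ∈ {−1, 1} } and U = { q ∈ ℝ² : there exist i ≠ j with ‖q − pᵢ‖ = |sᵢ| and ‖q − pⱼ‖ = |sⱼ|, and ‖q − pₖ‖ ≥ |sₖ| for all k }. Then there exist q ∈ P and ε ∈ {−1, 1} such that the family augmented by the sample (p, ε·‖q − p‖) is geometrically consistent. -/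
lemma det_zero_parallel (u c : EuclideanSpace ℝ (Fin 2)) (hc : c ≠ 0)
    (hdet : u 0 * c 1 - u 1 * c 0 = 0) :
    u = ((inner ℝ u c : ℝ) / ‖c‖ ^ 2) • c := by
  have hinner : (inner ℝ u c : ℝ) = u 0 * c 0 + u 1 * c 1 := by
    simp [PiLp.inner_apply, Fin.sum_univ_two, mul_comm]
  have hnc : ‖c‖ ^ 2 = c 0 ^ 2 + c 1 ^ 2 := by
    rw [EuclideanSpace.norm_eq, Real.sq_sqrt (by positivity), Fin.sum_univ_two, Real.norm_eq_abs,
      Real.norm_eq_abs, sq_abs, sq_abs]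
  have hc2 : c 0 ^ 2 + c 1 ^ 2 ≠ 0 := by
    rw [← hnc]; simpa using pow_ne_zero 2 (norm_ne_zero_iff.mpr hc)
  ext k
  have hk : (((inner ℝ u c : ℝ) / ‖c‖ ^ 2) • c) k = ((inner ℝ u c : ℝ) / ‖c‖ ^ 2) * c k := rfl
  rw [hk, hinner, hnc, div_mul_eq_mul_div, eq_div_iff hc2]
  fin_cases k
  · show u 0 * (c 0 ^ 2 + c 1 ^ 2) = (u 0 * c 0 + u 1 * c 1) * c 0
    linear_combination c 1 * hdet
  · show u 1 * (c 0 ^ 2 + c 1 ^ 2) = (u 0 * c 0 + u 1 * c 1) * c 1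
    linear_combination (- c 0) * hdet



private lemma aux_h3 {r K m t : ℝ} (hr0 : 0 < r) (hKle : K ≤ 1 + t ^ 2)
    (ht2 : t ^ 2 = m ^ 2) : r * K - r ≤ r * m ^ 2 := by nlinarith

private lemma aux_h4 {r m η : ℝ} (hr0 : 0 < r) (hη : 0 < η)
    (hmη : m ≤ η / (2 * r + 1)) : m * (2 * r) < η := by
  have h5 := mul_le_mul_of_nonneg_left hmη (by positivity : (0:ℝ) ≤ 2 * r)
  have h6 : 2 * r * (η / (2 * r + 1)) < η := by
    rw [← mul_div_assoc, div_lt_iff₀ (by linarith : (0:ℝ) < 2 * r + 1)]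
    nlinarith
  calc m * (2 * r) = 2 * r * m := by ring
    _ ≤ 2 * r * (η / (2 * r + 1)) := h5
    _ < η := h6

private lemma aux_h7 {r m : ℝ} (hr0 : 0 < r) (hm0 : 0 < m) (hm1 : m ≤ 1) :
    r * m ^ 2 ≤ r * m := by
  calc r * m ^ 2 = (r * m) * m := by ring
    _ ≤ (r * m) * 1 := mul_le_mul_of_nonneg_left hm1 (mul_pos hr0 hm0).le
    _ = r * m := mul_one _

private lemma aux_case {a b K m t : ℝ} (hK1 : 1 ≤ K) (hKle : K ≤ 1 + t ^ 2)
    (ht2 : t ^ 2 = m ^ 2) (htb : t * b = m * |b|) (hm0 : 0 < m)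
    (hmb : m ≤ |b| / (2 * (|a| + 1))) (hbne : b ≠ 0) : a * K < a + t * b := by
  have htb0 : 0 < t * b := htb ▸ mul_pos hm0 (abs_pos.mpr hbne)
  rcases le_or_gt a 0 with ha0 | ha0
  · have : a * K ≤ a := by nlinarith
    linarith
  · have h5 : a * K ≤ a * (1 + t ^ 2) := by nlinarith
    have h6 : a * t ^ 2 < t * b := by
      have h7 : a * m ≤ |b| / 2 := by
        have h8 := mul_le_mul_of_nonneg_left hmb (le_of_lt ha0)
        calc a * m ≤ a * (|b| / (2 * (|a| + 1))) := h8
          _ ≤ |b| / 2 := by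
              rw [abs_of_pos ha0, ← mul_div_assoc,
                div_le_div_iff₀ (by positivity) (by norm_num)]
              nlinarith [abs_nonneg b]
      rw [htb, ht2]
      nlinarith [abs_pos.mpr hbne]
    nlinarith

private lemma aux_sq {X P A R : ℝ} (h : A < P) : X - 2 * P + R < X - 2 * A + R := by
  linarith

lemma exists_closer_on_circle (u c : EuclideanSpace ℝ (Fin 2)) (hu : u ≠ 0)
    (hdet : u 0 * c 1 - u 1 * c 0 ≠ 0) :
    ∀ η > 0, ∃ v : EuclideanSpace ℝ (Fin 2),
      ‖v‖ = ‖u‖ ∧ ‖v - u‖ < η ∧ ‖c - v‖ < ‖c - u‖ := by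
  intro η hη
  have hinner2 : ∀ x y : EuclideanSpace ℝ (Fin 2),
      (inner ℝ x y : ℝ) = x 0 * y 0 + x 1 * y 1 := by
    intro x y; simp [PiLp.inner_apply, Fin.sum_univ_two, mul_comm]
  have hns : ∀ x : EuclideanSpace ℝ (Fin 2), ‖x‖ ^ 2 = x 0 ^ 2 + x 1 ^ 2 := by
    intro x; rw [EuclideanSpace.norm_eq, Real.sq_sqrt (by positivity), Fin.sum_univ_two, Real.norm_eq_abs,
      Real.norm_eq_abs, sq_abs, sq_abs]
  set r := ‖u‖ with hr
  have hr0 : 0 < r := norm_pos_iff.mpr hu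
  set w : EuclideanSpace ℝ (Fin 2) := !₂[-u 1, u 0] with hwdef
  have hw0 : w 0 = -u 1 := rfl
  have hw1 : w 1 = u 0 := rfl
  have huw : (inner ℝ u w : ℝ) = 0 := by rw [hinner2, hw0, hw1]; ring
  have hnw : ‖w‖ = r := by
    have h2 : ‖w‖ ^ 2 = ‖u‖ ^ 2 := by rw [hns, hns, hw0, hw1]; ring
    have := congrArg Real.sqrt h2
    rwa [Real.sqrt_sq (norm_nonneg _), Real.sqrt_sq (norm_nonneg _)] at this
  set a : ℝ := inner ℝ c u with ha
  set b : ℝ := inner ℝ c w with hb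
  have hbne : b ≠ 0 := by
    rw [hb, hinner2, hw0, hw1]
    intro hcon; apply hdet; linarith [hcon]
  have hcu : ‖c - u‖ ^ 2 = ‖c‖ ^ 2 - 2 * a + r ^ 2 := by
    rw [norm_sub_sq_real, ← ha, ← hr]
  -- choose the step size
  set m : ℝ := min 1 (min (η / (2 * r + 1)) (|b| / (2 * (|a| + 1)))) with hm
  have hm0 : 0 < m := by
    apply lt_min (by norm_num)
    exact lt_min (by positivity) (by positivity)
  have hm1 : m ≤ 1 := min_le_left _ _
  have hmη : m ≤ η / (2 * r + 1) := le_trans (min_le_right _ _) (min_le_left _ _)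
  have hmb : m ≤ |b| / (2 * (|a| + 1)) := le_trans (min_le_right _ _) (min_le_right _ _)
  set t : ℝ := (if 0 < b then 1 else -1) * m with ht
  have habs : |t| = m := by
    rw [ht, abs_mul]
    split_ifs <;> simp [abs_of_pos hm0]
  have htb : t * b = m * |b| := by
    rw [ht]
    split_ifs with hbp
    · rw [abs_of_pos hbp]; ring
    · rw [abs_of_neg (lt_of_le_of_ne (not_lt.mp hbp) hbne)]; ring
  have ht2 : t ^ 2 = m ^ 2 := by rw [← sq_abs, habs]
  set K : ℝ := Real.sqrt (1 + t ^ 2) with hK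
  have hKsq : K ^ 2 = 1 + t ^ 2 := Real.sq_sqrt (by positivity)
  have hKnn : 0 ≤ K := Real.sqrt_nonneg _
  have hK1 : 1 ≤ K := by nlinarith [sq_nonneg t]
  have hK0 : 0 < K := lt_of_lt_of_le one_pos hK1
  have hKle : K ≤ 1 + t ^ 2 := by nlinarith [sq_nonneg t, sq_nonneg (K - 1)]
  clear_value K t m b a
  -- the perturbed vector
  have hN2 : ‖u + t • w‖ ^ 2 = (r * K) ^ 2 := by
    rw [norm_add_sq_real, real_inner_smul_right, huw, norm_smul, Real.norm_eq_abs, hnw,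
      mul_pow, mul_pow, sq_abs, hKsq]
    ring
  have hN : ‖u + t • w‖ = r * K := by
    have := congrArg Real.sqrt hN2
    rwa [Real.sqrt_sq (norm_nonneg _), Real.sqrt_sq (mul_pos hr0 hK0).le] at this
  have hNpos : 0 < ‖u + t • w‖ := by rw [hN]; exact mul_pos hr0 hK0
  set v : EuclideanSpace ℝ (Fin 2) := (r / ‖u + t • w‖) • (u + t • w) with hv
  have hvnorm : ‖v‖ = r := by
    rw [hv, norm_smul, Real.norm_eq_abs, abs_of_pos (div_pos hr0 hNpos),
      div_mul_cancel₀ _ hNpos.ne']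
  have h1 : ‖v - (u + t • w)‖ = r * K - r := by
    have e0 : v - (u + t • w) = (r / ‖u + t • w‖ - 1) • (u + t • w) := by
      rw [hv, sub_smul, one_smul]
    rw [e0, norm_smul, Real.norm_eq_abs, hN]
    have hrK : (0:ℝ) < r * K := mul_pos hr0 hK0
    have e : r / (r * K) - 1 = (r - r * K) / (r * K) := div_sub_one hrK.ne'
    rw [e, abs_div, abs_of_pos hrK, div_mul_cancel₀ _ hrK.ne',
      abs_of_nonpos (sub_nonpos.mpr (le_mul_of_one_le_right hr0.le hK1))]
    ring
  have h2 : ‖t • w‖ = m * r := by rw [norm_smul, Real.norm_eq_abs, hnw, habs]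
  have hstep : ‖v - u‖ ≤ ‖v - (u + t • w)‖ + ‖t • w‖ := by
    have e : v - u = (v - (u + t • w)) + t • w := by abel
    rw [e]; exact norm_add_le _ _
  have hcv : ‖c - v‖ ^ 2 = ‖c‖ ^ 2 - 2 * ((r / (r * K)) * (a + t * b)) + r ^ 2 := by
    rw [norm_sub_sq_real, hvnorm]
    congr 2
    rw [hv, real_inner_smul_right, inner_add_right, real_inner_smul_right, ← ha, ← hb, hN]
  -- make everything opaque for arithmetic
  have hvu : ‖v - u‖ ≤ (r * K - r) + m * r := by rw [← h1, ← h2]; exact hstep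
  refine ⟨v, hvnorm, ?_, ?_⟩
  · -- ‖v - u‖ < η
    calc ‖v - u‖ ≤ (r * K - r) + m * r := hvu
      _ ≤ r * m ^ 2 + m * r := add_le_add_left (aux_h3 hr0 hKle ht2) _
      _ ≤ r * m + m * r := add_le_add_left (aux_h7 hr0 hm0 hm1) _
      _ = m * (2 * r) := by ring
      _ < η := aux_h4 hr0 hη hmη
  · -- ‖c - v‖ < ‖c - u‖
    have hcase : a * K < a + t * b := aux_case hK1 hKle ht2 htb hm0 hmb hbne
    have hkey : a < (r / (r * K)) * (a + t * b) := by
      rw [div_mul_eq_mul_div, lt_div_iff₀ (mul_pos hr0 hK0)]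
      calc a * (r * K) = r * (a * K) := by ring
        _ < r * (a + t * b) := mul_lt_mul_of_pos_left hcase hr0
    have hsq : ‖c - v‖ ^ 2 < ‖c - u‖ ^ 2 := by rw [hcv, hcu]; exact aux_sq hkey
    exact lt_of_pow_lt_pow_left₀ 2 (norm_nonneg _) hsq

private lemma aux_tau {ρ δ : ℝ} (hρ : 0 < ρ) (hδ : 0 < δ) :
    0 < min (1/2 : ℝ) (δ / (2 * ρ + 1)) ∧
    min (1/2 : ℝ) (δ / (2 * ρ + 1)) * ρ < δ ∧
    (1 - min (1/2 : ℝ) (δ / (2 * ρ + 1))) * ρ < ρ := by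
  have h1 : 0 < min (1/2 : ℝ) (δ / (2 * ρ + 1)) := lt_min (by norm_num) (by positivity)
  refine ⟨h1, ?_, ?_⟩
  · have h2 : min (1/2 : ℝ) (δ / (2 * ρ + 1)) ≤ δ / (2 * ρ + 1) := min_le_right _ _
    have h3 := mul_le_mul_of_nonneg_right h2 hρ.le
    have h4 : (δ / (2 * ρ + 1)) * ρ < δ := by
      rw [div_mul_eq_mul_div, div_lt_iff₀ (by linarith)]
      nlinarith
    linarith
  · nlinarith [h1]

private lemma aux_coeff {a si d : ℝ} (hsi : si ≠ 0) (hd : d ≠ 0) :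
    (a / (si * d) * si) / d = a / d ^ 2 := by
  field_simp

/-- **Grow-to point validity in ℝ².** Given a geometrically consistent family and a new
point `pt` distinct from all sample points, there is a candidate grow-to point `q` in
`P = {pt} ∪ T ∪ U` (tangent points and uncovered intersection points) and a sign `ε`
such that augmenting the family by `(pt, ε·‖q − pt‖)` is geometrically consistent. -/
theorem grow_to_point_validity_2d (n : ℕ)
    (p : Fin n → EuclideanSpace ℝ (Fin 2)) (s : Fin n → ℝ)
    (h : GeomConsistent p s) (pt : EuclideanSpace ℝ (Fin 2))
    (hpt : ∀ i, pt ≠ p i) :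
    ∃ q : EuclideanSpace ℝ (Fin 2),
      (q = pt ∨
        (∃ i : Fin n, ∃ ε : ℝ, (ε = 1 ∨ ε = -1) ∧
          q = p i + ((ε * |s i|) / ‖pt - p i‖) • (pt - p i)) ∨
        (∃ i j : Fin n, i ≠ j ∧ dist q (p i) = |s i| ∧ dist q (p j) = |s j| ∧
          ∀ k, |s k| ≤ dist q (p k))) ∧
      ∃ ε : ℝ, (ε = 1 ∨ ε = -1) ∧
        GeomConsistent (Fin.snoc p pt) (Fin.snoc s (ε * ‖q - pt‖)) := by
  classical
  obtain ⟨hdisj, hunc⟩ := h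
  set F : Set (EuclideanSpace ℝ (Fin 2)) := {x | ∀ j, |s j| ≤ dist x (p j)} with hF
  have hFc : IsClosed F := by
    have e : F = ⋂ j, {x | |s j| ≤ dist x (p j)} := by
      ext x; simp [hF, Set.mem_iInter, Set.mem_setOf_eq]
    rw [e]
    exact isClosed_iInter fun j =>
      isClosed_le continuous_const (continuous_id.dist continuous_const)
  have hFne : F.Nonempty := by
    rcases Nat.eq_zero_or_pos n with hn | hn
    · exact ⟨pt, fun j => absurd j.isLt (by omega)⟩
    · obtain ⟨q0, hq1, hq2⟩ := hunc ⟨0, hn⟩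
      refine ⟨q0, fun j => ?_⟩
      by_cases hj : j = ⟨0, hn⟩
      · subst hj; exact hq1.ge
      · exact hq2 j hj
  obtain ⟨q0, hq0F, hq0d⟩ := hFc.exists_infDist_eq_dist hFne pt
  set ρ := dist pt q0 with hρdef
  have hρle : ∀ x ∈ F, ρ ≤ dist pt x := by
    intro x hx
    rw [← hq0d]
    exact Metric.infDist_le_dist_of_mem hx
  have hρnn : 0 ≤ ρ := dist_nonneg
  rcases eq_or_lt_of_le hρnn with hρ0 | hρpos
  · -- ρ = 0 : pt itself is uncovered; augment with value 0
    have hptq0 : pt = q0 := dist_eq_zero.mp hρ0.symm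
    have hptF : pt ∈ F := hptq0 ▸ hq0F
    have hv : (1 : ℝ) * ‖pt - pt‖ = 0 := by simp
    refine ⟨pt, Or.inl rfl, 1, Or.inl rfl, ?_, ?_⟩
    · intro i j hi hj
      induction i using Fin.lastCases with
      | last =>
        rw [Fin.snoc_last, hv] at hi
        exact absurd hi (lt_irrefl 0)
      | cast i =>
        induction j using Fin.lastCases with
        | last =>
          rw [Fin.snoc_last, hv] at hj
          exact absurd hj (lt_irrefl 0)
        | cast j =>
          simp only [Fin.snoc_castSucc] at hi hj ⊢
          exact hdisj i j hi hj
    · intro i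
      induction i using Fin.lastCases with
      | last =>
        refine ⟨pt, ?_, ?_⟩
        · rw [Fin.snoc_last, Fin.snoc_last, hv]; simp
        · intro j hj
          induction j using Fin.lastCases with
          | last => exact absurd rfl hj
          | cast j => simp only [Fin.snoc_castSucc]; exact hptF j
      | cast i =>
        obtain ⟨qi, h1, h2⟩ := hunc i
        refine ⟨qi, by simp only [Fin.snoc_castSucc]; exact h1, ?_⟩
        intro j hj
        induction j using Fin.lastCases with
        | last =>
          simp only [Fin.snoc_last, hv]
          simpa using dist_nonneg
        | cast j =>
          simp only [Fin.snoc_castSucc]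
          exact h2 j fun hc => hj (by rw [hc])
  · -- ρ > 0
    have hρlt : ∀ x, dist pt x < ρ → ∃ j, dist x (p j) < |s j| := by
      intro x hx
      by_contra hcon
      push_neg at hcon
      exact absurd (hρle x hcon) (not_le.mpr hx)
    -- membership of q0 in the candidate set P
    have hmemP : (q0 = pt ∨
        (∃ i : Fin n, ∃ ε : ℝ, (ε = 1 ∨ ε = -1) ∧
          q0 = p i + ((ε * |s i|) / ‖pt - p i‖) • (pt - p i)) ∨
        (∃ i j : Fin n, i ≠ j ∧ dist q0 (p i) = |s i| ∧ dist q0 (p j) = |s j| ∧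
          ∀ k, |s k| ≤ dist q0 (p k))) := by
      by_cases hU : ∃ i j : Fin n, i ≠ j ∧ dist q0 (p i) = |s i| ∧ dist q0 (p j) = |s j|
      · obtain ⟨i, j, hij, h1, h2⟩ := hU
        exact Or.inr (Or.inr ⟨i, j, hij, h1, h2, fun k => hq0F k⟩)
      by_cases hE : ∃ i : Fin n, dist q0 (p i) = |s i|
      · -- single active constraint
        obtain ⟨i, hi⟩ := hE
        have huniq : ∀ j, j ≠ i → |s j| < dist q0 (p j) := by
          intro j hj
          refine lt_of_le_of_ne (hq0F j) fun hc => ?_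
          exact hU ⟨j, i, hj, hc.symm, hi⟩
        by_cases hsi : |s i| = 0
        · -- q0 = p i, degenerate tangent point
          have hq0pi : q0 = p i := by
            rw [hsi] at hi
            exact dist_eq_zero.mp hi
          refine Or.inr (Or.inl ⟨i, 1, Or.inl rfl, ?_⟩)
          rw [hsi, hq0pi]
          simp
        · -- proper tangent point: q0 is radial
          set u : EuclideanSpace ℝ (Fin 2) := q0 - p i with hu
          set c : EuclideanSpace ℝ (Fin 2) := pt - p i with hc
          have hcne : c ≠ 0 := sub_ne_zero.mpr (hpt i)
          have hnu : ‖u‖ = |s i| := by rw [hu, ← dist_eq_norm, hi]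
          have hune : u ≠ 0 := by
            intro hcon
            rw [hcon, norm_zero] at hnu
            exact hsi hnu.symm
          have hq0e : q0 = p i + u := by rw [hu]; abel
          have hcu : c - u = pt - q0 := by rw [hu, hc]; abel
          -- an open neighbourhood where the inactive constraints stay strict
          have hSopen : IsOpen (⋂ j, {x : EuclideanSpace ℝ (Fin 2) |
              j ≠ i → |s j| < dist x (p j)}) := by
            refine isOpen_iInter_of_finite fun j => ?_
            by_cases hj : j = i
            · have e : {x : EuclideanSpace ℝ (Fin 2) | j ≠ i → |s j| < dist x (p j)} =
                  Set.univ := by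
                ext x; simp [hj]
              rw [e]; exact isOpen_univ
            · have e : {x : EuclideanSpace ℝ (Fin 2) | j ≠ i → |s j| < dist x (p j)} =
                  {x | |s j| < dist x (p j)} := by
                ext x; simp [hj]
              rw [e]
              exact isOpen_lt continuous_const (continuous_id.dist continuous_const)
          have hq0S : q0 ∈ ⋂ j, {x : EuclideanSpace ℝ (Fin 2) |
              j ≠ i → |s j| < dist x (p j)} := by
            rw [Set.mem_iInter]
            exact fun j hj => huniq j hj
          obtain ⟨δ, hδ0, hδball⟩ := Metric.isOpen_iff.mp hSopen q0 hq0S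
          have hdet0 : u 0 * c 1 - u 1 * c 0 = 0 := by
            by_contra hdet
            obtain ⟨v, hv1, hv2, hv3⟩ := exists_closer_on_circle u c hune hdet δ hδ0
            set x : EuclideanSpace ℝ (Fin 2) := p i + v with hx
            have hxq0 : dist x q0 = ‖v - u‖ := by
              rw [dist_eq_norm, hx, hq0e]
              congr 1
              abel
            have hxF : x ∈ F := by
              intro j
              by_cases hj : j = i
              · subst hj
                rw [hx, dist_self_add_left, hv1, hnu]
              · have hxS := hδball (show x ∈ Metric.ball q0 δ by
                  rw [Metric.mem_ball, hxq0]; exact hv2)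
                rw [Set.mem_iInter] at hxS
                exact (hxS j hj).le
            have hdx : dist pt x < ρ := by
              have e : pt - x = c - v := by rw [hx, hc]; abel
              rw [dist_eq_norm, e]
              calc ‖c - v‖ < ‖c - u‖ := hv3
                _ = ‖pt - q0‖ := by rw [hcu]
                _ = ρ := (dist_eq_norm pt q0).symm
            exact absurd (hρle x hxF) (not_le.mpr hdx)
          -- parallel: q0 is a radial (tangent) point
          have hpar := det_zero_parallel u c hcne hdet0
          set a : ℝ := inner ℝ u c with ha
          set d : ℝ := ‖c‖ with hd
          have hd0 : 0 < d := norm_pos_iff.mpr hcne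
          have hna : |a| / d = |s i| := by
            have e := congrArg norm hpar
            rw [norm_smul, Real.norm_eq_abs, abs_div, abs_pow, abs_norm] at e
            rw [hnu] at e
            rw [← hd] at e
            rw [e]
            field_simp
          have hane : a ≠ 0 := by
            intro hcon
            rw [hcon] at hna
            simp at hna
            exact hsi (by rw [← hna])
          refine Or.inr (Or.inl ⟨i, a / (|s i| * d), ?_, ?_⟩)
          · have habs : |a / (|s i| * d)| = 1 := by
              rw [abs_div, abs_mul, abs_abs, abs_of_pos hd0]
              rw [← hna]
              field_simp
            rcases (abs_eq (by norm_num : (0:ℝ) ≤ 1)).mp habs with h1 | h1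
            · exact Or.inl h1
            · exact Or.inr h1
          · have hcoef : (a / (|s i| * d) * |s i|) / ‖pt - p i‖ = a / d ^ 2 := by
              rw [show ‖pt - p i‖ = d by rw [hd, hc]]
              exact aux_coeff hsi hd0.ne'
            rw [hcoef, show pt - p i = c from hc.symm, ← hpar, hq0e]
      · -- no active constraint : contradiction with minimality
        push_neg at hE
        have hstrict : ∀ j, |s j| < dist q0 (p j) :=
          fun j => lt_of_le_of_ne (hq0F j) (fun hc => hE j hc.symm)
        exfalso
        have hSopen : IsOpen (⋂ j, {x : EuclideanSpace ℝ (Fin 2) |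
            |s j| < dist x (p j)}) :=
          isOpen_iInter_of_finite fun j =>
            isOpen_lt continuous_const (continuous_id.dist continuous_const)
        have hq0S : q0 ∈ ⋂ j, {x : EuclideanSpace ℝ (Fin 2) | |s j| < dist x (p j)} := by
          rw [Set.mem_iInter]; exact hstrict
        obtain ⟨δ, hδ0, hδball⟩ := Metric.isOpen_iff.mp hSopen q0 hq0S
        obtain ⟨hτ0, hτ1, hτ2⟩ := aux_tau hρpos hδ0
        set τ : ℝ := min (1/2 : ℝ) (δ / (2 * ρ + 1)) with hτ
        set x : EuclideanSpace ℝ (Fin 2) := q0 + τ • (pt - q0) with hx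
        have hxq0 : dist x q0 = τ * ρ := by
          have e : x - q0 = τ • (pt - q0) := by rw [hx]; abel
          rw [dist_eq_norm, e, norm_smul, Real.norm_eq_abs, abs_of_pos hτ0,
            ← dist_eq_norm, ← hρdef]
        have hxF : x ∈ F := by
          intro j
          have hxS := hδball (show x ∈ Metric.ball q0 δ by
            rw [Metric.mem_ball, hxq0]; exact hτ1)
          rw [Set.mem_iInter] at hxS
          exact (hxS j).le
        have hdx : dist pt x < ρ := by
          have e : pt - x = (1 - τ) • (pt - q0) := by rw [hx]; module
          rw [dist_eq_norm, e, norm_smul, Real.norm_eq_abs,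
            abs_of_pos (by rw [hτ]; norm_num [lt_min_iff] : (0:ℝ) < 1 - τ),
            ← dist_eq_norm]
          exact hτ2
        exact absurd (hρle x hxF) (not_le.mpr hdx)
    -- the sign: connectivity of the new ball
    set A : Set (EuclideanSpace ℝ (Fin 2)) :=
      ⋃ j, ⋃ (_ : 0 < s j), Metric.ball (p j) |s j| with hA
    set B : Set (EuclideanSpace ℝ (Fin 2)) :=
      ⋃ j, ⋃ (_ : s j < 0), Metric.ball (p j) |s j| with hB
    have hAopen : IsOpen A := isOpen_iUnion fun j => isOpen_iUnion fun _ => Metric.isOpen_ball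
    have hBopen : IsOpen B := isOpen_iUnion fun j => isOpen_iUnion fun _ => Metric.isOpen_ball
    have hdisjAB : Disjoint A B := by
      rw [Set.disjoint_left]
      intro x hxA hxB
      simp only [hA, hB, Set.mem_iUnion] at hxA hxB
      obtain ⟨i, hi, hxi⟩ := hxA
      obtain ⟨j, hj, hxj⟩ := hxB
      exact Set.disjoint_left.mp (hdisj i j hi hj) hxi hxj
    have hcover : Metric.ball pt ρ ⊆ A ∪ B := by
      intro x hx
      obtain ⟨j, hjlt⟩ := hρlt x (by rw [dist_comm]; exact Metric.mem_ball.mp hx)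
      have hs0 : s j ≠ 0 := by
        intro h0
        rw [h0, abs_zero] at hjlt
        exact absurd hjlt (not_lt.mpr dist_nonneg)
      rcases hs0.lt_or_gt with hneg | hpos
      · right
        simp only [hB, Set.mem_iUnion]
        exact ⟨j, hneg, Metric.mem_ball.mpr hjlt⟩
      · left
        simp only [hA, Set.mem_iUnion]
        exact ⟨j, hpos, Metric.mem_ball.mpr hjlt⟩
    -- the uncovered-point component, uniform in the sign
    have hii : ∀ v : ℝ, |v| = ρ → ∀ i : Fin (n+1), ∃ q' : EuclideanSpace ℝ (Fin 2),
        dist q' ((Fin.snoc p pt : Fin (n+1) → EuclideanSpace ℝ (Fin 2)) i) =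
          |(Fin.snoc s v : Fin (n+1) → ℝ) i| ∧
        ∀ j : Fin (n+1), j ≠ i →
          |(Fin.snoc s v : Fin (n+1) → ℝ) j| ≤
            dist q' ((Fin.snoc p pt : Fin (n+1) → EuclideanSpace ℝ (Fin 2)) j) := by
      intro v hv i
      induction i using Fin.lastCases with
      | last =>
        refine ⟨q0, ?_, ?_⟩
        · rw [Fin.snoc_last, Fin.snoc_last, hv, dist_comm]
        · intro j hj
          induction j using Fin.lastCases with
          | last => exact absurd rfl hj
          | cast j => simp only [Fin.snoc_castSucc]; exact hq0F j
      | cast i =>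
        obtain ⟨qi, h1, h2⟩ := hunc i
        have hqiF : qi ∈ F := by
          intro j
          by_cases hj : j = i
          · subst hj; exact h1.ge
          · exact h2 j hj
        refine ⟨qi, by simp only [Fin.snoc_castSucc]; exact h1, ?_⟩
        intro j hj
        induction j using Fin.lastCases with
        | last =>
          simp only [Fin.snoc_last]
          rw [hv, dist_comm]
          exact hρle qi hqiF
        | cast j =>
          simp only [Fin.snoc_castSucc]
          exact h2 j fun hc => hj (by rw [hc])
    have hq0pt : ‖q0 - pt‖ = ρ := by rw [← dist_eq_norm, dist_comm]
    rcases (convex_ball pt ρ).isPreconnected.subset_or_subset hAopen hBopen hdisjAB hcover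
      with hside | hside
    · -- positive side
      refine ⟨q0, hmemP, 1, Or.inl rfl, ?_, ?_⟩
      · intro i j hi hj
        induction i using Fin.lastCases with
        | last =>
          induction j using Fin.lastCases with
          | last =>
            rw [Fin.snoc_last] at hi hj
            exact absurd hj (not_lt.mpr hi.le)
          | cast j =>
            simp only [Fin.snoc_last, Fin.snoc_castSucc] at hi hj ⊢
            have habs : |1 * ‖q0 - pt‖| = ρ := by
              rw [one_mul, abs_norm, hq0pt]
            rw [habs]
            rw [Set.disjoint_left]
            intro x hx hx2
            have hxB : x ∈ B := by
              simp only [hB, Set.mem_iUnion]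
              exact ⟨j, hj, hx2⟩
            exact Set.disjoint_left.mp hdisjAB (hside hx) hxB
        | cast i =>
          induction j using Fin.lastCases with
          | last =>
            rw [Fin.snoc_last] at hj
            have := norm_nonneg (q0 - pt)
            nlinarith [hj]
          | cast j =>
            simp only [Fin.snoc_castSucc] at hi hj ⊢
            exact hdisj i j hi hj
      · refine hii (1 * ‖q0 - pt‖) ?_
        rw [one_mul, abs_norm, hq0pt]
    · -- negative side
      refine ⟨q0, hmemP, -1, Or.inr rfl, ?_, ?_⟩
      · intro i j hi hj
        induction i using Fin.lastCases with
        | last =>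
          rw [Fin.snoc_last] at hi
          have := norm_nonneg (q0 - pt)
          nlinarith [hi]
        | cast i =>
          induction j using Fin.lastCases with
          | last =>
            simp only [Fin.snoc_last, Fin.snoc_castSucc] at hi hj ⊢
            have habs : |(-1 : ℝ) * ‖q0 - pt‖| = ρ := by
              rw [neg_one_mul, abs_neg, abs_norm, hq0pt]
            rw [habs]
            rw [Set.disjoint_right]
            intro x hx hx2
            have hxA : x ∈ A := by
              simp only [hA, Set.mem_iUnion]
              exact ⟨i, hi, hx2⟩
            exact Set.disjoint_left.mp hdisjAB hxA (hside hx)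
          | cast j =>
            simp only [Fin.snoc_castSucc] at hi hj ⊢
            exact hdisj i j hi hj
      · refine hii ((-1) * ‖q0 - pt‖) ?_
        rw [neg_one_mul, abs_neg, abs_norm, hq0pt]
end

section
/- Let d = 2 or d = 3, let (p₁, s₁), …, (pₙ, sₙ) be a realizable finite family of signed distance samples in ℝ^d, and let q₁, …, qₘ ∈ ℝ^d be further points. For each j, suppose s*ⱼ ∈ ℝ is such that the family (p₁, s₁), …, (pₙ, sₙ) augmented by the single sample (qⱼ, s*ⱼ) is realizable, and |s*ⱼ| ≤ |s| for every s ∈ ℝ for which the family augmented by the single sample (qⱼ, s) is realizable (i.e. s*ⱼ is a minimum valid value at qⱼ). Then the complete family (p₁, s₁), …, (pₙ, sₙ), (q₁, s*₁), …, (qₘ, s*ₘ) is realizable. -/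
open Metric Set

open Metric Set

section AuxGeneral

variable {E : Type*} [NormedAddCommGroup E] [NormedSpace ℝ E]

omit [NormedSpace ℝ E] in
theorem aux_le_infDist {s : Set E} {x : E} {b : ℝ} (hs : s.Nonempty)
    (h : ∀ y ∈ s, b ≤ dist x y) : b ≤ infDist x s := by
  rw [Metric.infDist_eq_iInf]
  haveI := hs.to_subtype
  exact le_ciInf fun y => h y y.2

theorem aux_exists_frontier_dist_le {A : Set E} {x y : E} (hx : x ∈ A) (hy : y ∉ A) :
    ∃ z ∈ frontier A, dist x z ≤ dist x y := by
  rcases (segment ℝ x y ∩ frontier A).eq_empty_or_nonempty with hF | hF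
  · exfalso
    have hsub : segment ℝ x y ⊆ interior A ∪ (closure A)ᶜ := by
      intro w hw
      by_cases h1 : w ∈ interior A
      · exact Or.inl h1
      · refine Or.inr fun h2 => ?_
        have hwf : w ∈ segment ℝ x y ∩ frontier A := ⟨hw, h2, h1⟩
        rw [hF] at hwf
        exact hwf
    have hdisj : Disjoint (interior A) (closure A)ᶜ :=
      disjoint_compl_right.mono_left interior_subset_closure
    rcases (convex_segment x y).isPreconnected.subset_or_subset isOpen_interior
        isClosed_closure.isOpen_compl hdisj hsub with hh | hh
    · exact hy (interior_subset (hh (right_mem_segment ℝ x y)))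
    · exact hh (left_mem_segment ℝ x y) (subset_closure hx)
  · obtain ⟨z, hz1, hz2⟩ := hF
    refine ⟨z, hz2, ?_⟩
    have h1 := dist_add_dist_of_mem_segment hz1
    have h2 : (0:ℝ) ≤ dist z y := dist_nonneg
    linarith

theorem aux_infDist_frontier_le_left {A : Set E} {x y : E} (hx : x ∈ A) (hy : y ∉ A) :
    infDist x (frontier A) ≤ dist x y := by
  obtain ⟨z, hz, hd⟩ := aux_exists_frontier_dist_le hx hy
  exact le_trans (infDist_le_dist_of_mem hz) hd

theorem aux_infDist_frontier_le_right {A : Set E} {x y : E} (hx : x ∉ A) (hy : y ∈ A) :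
    infDist x (frontier A) ≤ dist x y := by
  rw [← frontier_compl]
  exact aux_infDist_frontier_le_left (A := Aᶜ) hx (by simpa using hy)

theorem aux_ball_subset_of_le_infDist {A : Set E} {x : E} {r : ℝ} (hx : x ∈ A)
    (hr : r ≤ infDist x (frontier A)) : ball x r ⊆ A := by
  intro y hy
  by_contra hyA
  have h1 := aux_infDist_frontier_le_left hx hyA
  rw [mem_ball'] at hy
  linarith

theorem aux_interior_union_of_interior_empty {X : Type*} [TopologicalSpace X] {Y K : Set X}
    (hY : IsClosed Y) (hK : interior K = ∅) : interior (Y ∪ K) = interior Y := by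
  refine subset_antisymm ?_ (interior_mono subset_union_left)
  have hsub : interior (Y ∪ K) ⊆ Y := by
    intro x hx
    have hx' : x ∈ closure (interior (Y ∪ K) \ K) := by
      rw [_root_.mem_closure_iff]
      intro O hO hxO
      by_cases hOK : O ∩ interior (Y ∪ K) ⊆ K
      · exfalso
        have h2 : O ∩ interior (Y ∪ K) ⊆ interior K :=
          interior_maximal hOK (hO.inter isOpen_interior)
        rw [hK] at h2
        exact h2 ⟨hxO, hx⟩
      · obtain ⟨z, hz1, hz2⟩ := Set.not_subset.mp hOK
        exact ⟨z, hz1.1, hz1.2, hz2⟩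
    have h3 : closure (interior (Y ∪ K) \ K) ⊆ Y := by
      rw [hY.closure_subset_iff]
      intro z hz
      rcases interior_subset hz.1 with hh | hh
      · exact hh
      · exact absurd hh hz.2
    exact h3 hx'
  exact interior_maximal hsub isOpen_interior

theorem aux_interior_finite_empty [Nontrivial E] {F : Set E} (hF : F.Finite) :
    interior F = ∅ := by
  rw [Set.eq_empty_iff_forall_notMem]
  intro x hx
  obtain ⟨ε, hε, hball⟩ := Metric.isOpen_iff.mp isOpen_interior x hx
  obtain ⟨u, hu⟩ := exists_ne (0 : E)
  have hun : 0 < ‖u‖ := norm_pos_iff.mpr hu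
  have hIinf : (Set.Ioo (0:ℝ) (ε / ‖u‖)).Infinite := Set.Ioo_infinite (by positivity)
  have hinj : Set.InjOn (fun t : ℝ => x + t • u) (Set.Ioo 0 (ε / ‖u‖)) := by
    intro a _ b _ hab
    have : a • u = b • u := by
      have := hab
      simpa using this
    exact smul_left_injective ℝ hu this
  have himg : (fun t : ℝ => x + t • u) '' (Set.Ioo 0 (ε / ‖u‖)) ⊆ F := by
    rintro y ⟨t, ht, rfl⟩
    refine interior_subset (hball ?_)
    rw [mem_ball, dist_self_add_left, norm_smul, Real.norm_eq_abs, abs_of_pos ht.1]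
    calc t * ‖u‖ < (ε / ‖u‖) * ‖u‖ := by
          exact mul_lt_mul_of_pos_right ht.2 hun
      _ = ε := by field_simp
  exact ((hIinf.image hinj).mono himg) hF

end AuxGeneral

section WitSec

variable {d n : ℕ}

open Classical in
/-- `Z` is a witness realizing the sample family `(p, s)`. -/
def Wit (p : Fin n → EuclideanSpace ℝ (Fin d)) (s : Fin n → ℝ)
    (Z : Set (EuclideanSpace ℝ (Fin d))) : Prop :=
  IsClosed Z ∧ (frontier Z).Nonempty ∧
    ∀ i, s i = if p i ∈ Z then -infDist (p i) (frontier Z) else infDist (p i) (frontier Z)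

variable {p : Fin n → EuclideanSpace ℝ (Fin d)} {s : Fin n → ℝ}
  {Z : Set (EuclideanSpace ℝ (Fin d))}

theorem wit_mem_of_nonpos (hZ : Wit p s Z) {i : Fin n} (hi : s i ≤ 0) : p i ∈ Z := by
  by_contra hmem
  have hv := hZ.2.2 i
  rw [if_neg hmem] at hv
  rcases lt_or_eq_of_le hi with hlt | heq
  · exact absurd hv.symm (by nlinarith [infDist_nonneg (x := p i) (s := frontier Z)])
  · have h0 : infDist (p i) (frontier Z) = 0 := by rw [← hv, ← heq]
    have : p i ∈ frontier Z :=
      (isClosed_frontier.mem_iff_infDist_zero hZ.2.1).mpr h0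
    exact hmem (hZ.1.frontier_subset this)

theorem wit_not_mem_of_pos (hZ : Wit p s Z) {i : Fin n} (hi : 0 < s i) : p i ∉ Z := by
  intro hmem
  have hv := hZ.2.2 i
  rw [if_pos hmem] at hv
  nlinarith [infDist_nonneg (x := p i) (s := frontier Z)]

theorem wit_infDist (hZ : Wit p s Z) (i : Fin n) :
    infDist (p i) (frontier Z) = |s i| := by
  have hv := hZ.2.2 i
  by_cases hmem : p i ∈ Z
  · rw [if_pos hmem] at hv
    rw [hv, abs_neg, abs_of_nonneg infDist_nonneg]
  · rw [if_neg hmem] at hv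
    rw [hv, abs_of_nonneg infDist_nonneg]

theorem wit_closedBall_subset (hZ : Wit p s Z) {i : Fin n} (hi : s i ≤ 0) :
    closedBall (p i) (-(s i)) ⊆ Z := by
  rcases lt_or_eq_of_le hi with hlt | heq
  · have hball : ball (p i) (-(s i)) ⊆ Z := by
      refine aux_ball_subset_of_le_infDist (wit_mem_of_nonpos hZ hi) ?_
      rw [wit_infDist hZ i, abs_of_nonpos hi]
    rw [← closure_ball (p i) (by linarith : -(s i) ≠ 0)]
    exact closure_minimal hball hZ.1
  · rw [heq, neg_zero, closedBall_zero]
    simpa using wit_mem_of_nonpos hZ hi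

theorem wit_dist_of_pos (hZ : Wit p s Z) {i : Fin n} (hi : 0 < s i) :
    ∀ z ∈ Z, s i ≤ dist (p i) z := by
  intro z hz
  have h1 := aux_infDist_frontier_le_right (wit_not_mem_of_pos hZ hi) hz
  rw [wit_infDist hZ i, abs_of_pos hi] at h1
  exact h1

open Classical in
theorem wit_snoc (hZ : Wit p s Z) (x : EuclideanSpace ℝ (Fin d)) :
    Realizable (Fin.snoc p x) (Fin.snoc s
      (if x ∈ Z then -infDist x (frontier Z) else infDist x (frontier Z))) := by
  refine ⟨Z, hZ.1, hZ.2.1, ?_⟩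
  intro i'
  induction i' using Fin.lastCases with
  | last =>
    have e : (Fin.snoc p x : Fin (n+1) → EuclideanSpace ℝ (Fin d)) (Fin.last n) = x := by simp
    have e2 : (Fin.snoc s (if x ∈ Z then -infDist x (frontier Z) else infDist x (frontier Z)) :
        Fin (n+1) → ℝ) (Fin.last n)
        = (if x ∈ Z then -infDist x (frontier Z) else infDist x (frontier Z)) := by simp
    rw [e, e2]
  | cast i =>
    have e : (Fin.snoc p x : Fin (n+1) → EuclideanSpace ℝ (Fin d)) i.castSucc = p i := by simp
    have e2 : (Fin.snoc s (if x ∈ Z then -infDist x (frontier Z) else infDist x (frontier Z)) :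
        Fin (n+1) → ℝ) i.castSucc = s i := by simp
    rw [e, e2]
    exact hZ.2.2 i

theorem wit_restrict {x : EuclideanSpace ℝ (Fin d)} {v : ℝ}
    (hZ : Wit (Fin.snoc p x) (Fin.snoc s v) Z) : Wit p s Z := by
  refine ⟨hZ.1, hZ.2.1, fun i => ?_⟩
  have h1 := hZ.2.2 i.castSucc
  have e : (Fin.snoc p x : Fin (n+1) → EuclideanSpace ℝ (Fin d)) i.castSucc = p i := by simp
  have e2 : (Fin.snoc s v : Fin (n+1) → ℝ) i.castSucc = s i := by simp
  rw [e, e2] at h1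
  exact h1

end WitSec

/-- **Minimum-radii corollary.** For `d = 2` or `d = 3`, let `(p, s)` be a realizable
family and `q 1, …, q m` further points. If each `sstar j` is a minimum valid value at
`q j` (i.e. the family augmented by `(q j, sstar j)` alone is realizable, and `|sstar j|`
is minimal among all singly-augmenting valid values), then the complete family obtained
by adding all samples `(q j, sstar j)` at once is realizable. -/
theorem min_valid_values_jointly_realizable (d : ℕ) (hd : d = 2 ∨ d = 3) (n m : ℕ)
    (p : Fin n → EuclideanSpace ℝ (Fin d)) (s : Fin n → ℝ) (h : Realizable p s)
    (q : Fin m → EuclideanSpace ℝ (Fin d)) (sstar : Fin m → ℝ)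
    (hvalid : ∀ j, Realizable (Fin.snoc p (q j)) (Fin.snoc s (sstar j)))
    (hmin : ∀ j, ∀ v : ℝ, Realizable (Fin.snoc p (q j)) (Fin.snoc s v) →
      |sstar j| ≤ |v|) :
    Realizable (Sum.elim p q) (Sum.elim s sstar) := by
  classical
  have hdpos : 0 < d := by rcases hd with h' | h' <;> omega
  haveI ntE : Nontrivial (EuclideanSpace ℝ (Fin d)) := by
    refine ⟨EuclideanSpace.single ⟨0, hdpos⟩ (1:ℝ), 0, fun hc => ?_⟩
    have h1 : EuclideanSpace.single (⟨0, hdpos⟩ : Fin d) (1:ℝ) ⟨0, hdpos⟩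
        = (0 : EuclideanSpace ℝ (Fin d)) ⟨0, hdpos⟩ := by rw [hc]
    simp [EuclideanSpace.single_apply] at h1
  obtain ⟨Z0, hZ0c, hZ0ne, hZ0val⟩ := h
  have hW0 : Wit p s Z0 := ⟨hZ0c, hZ0ne, hZ0val⟩
  choose Zf hZfc hZfne hZfval using hvalid
  have hWjfull : ∀ j, Wit (Fin.snoc p (q j)) (Fin.snoc s (sstar j)) (Zf j) :=
    fun j => ⟨hZfc j, hZfne j, hZfval j⟩
  have hWj : ∀ j, Wit p s (Zf j) := fun j => wit_restrict (hWjfull j)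
  set r : Fin m → ℝ := fun j => |sstar j| with hrdef
  have hrj : ∀ j, r j = |sstar j| := fun _ => rfl
  -- minimality of |sstar j| against every witness of (p, s)
  have hminD : ∀ Z, Wit p s Z → ∀ j, r j ≤ infDist (q j) (frontier Z) := by
    intro Z hZ j
    have hreal := wit_snoc hZ (q j)
    have h2 := hmin j _ hreal
    rw [hrj]
    by_cases hm : q j ∈ Z
    · rw [if_pos hm, abs_neg, abs_of_nonneg infDist_nonneg] at h2; exact h2
    · rw [if_neg hm, abs_of_nonneg infDist_nonneg] at h2; exact h2
  -- value of q j in its own witness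
  have hQeq : ∀ j, sstar j = if q j ∈ Zf j then -infDist (q j) (frontier (Zf j))
      else infDist (q j) (frontier (Zf j)) := by
    intro j
    have h1 := (hWjfull j).2.2 (Fin.last n)
    have e : (Fin.snoc p (q j) : Fin (n+1) → EuclideanSpace ℝ (Fin d)) (Fin.last n) = q j := by
      simp
    have e2 : (Fin.snoc s (sstar j) : Fin (n+1) → ℝ) (Fin.last n) = sstar j := by simp
    rw [e, e2] at h1
    exact h1
  have hQD : ∀ j, infDist (q j) (frontier (Zf j)) = r j := by
    intro j
    have h1 := hQeq j
    rw [hrj]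
    by_cases hm : q j ∈ Zf j
    · rw [if_pos hm] at h1; rw [h1, abs_neg, abs_of_nonneg infDist_nonneg]
    · rw [if_neg hm] at h1; rw [h1, abs_of_nonneg infDist_nonneg]
  have hQmem_neg : ∀ j, sstar j < 0 → q j ∈ Zf j := by
    intro j hj
    by_contra hm
    have h1 := hQeq j
    rw [if_neg hm] at h1
    nlinarith [infDist_nonneg (x := q j) (s := frontier (Zf j))]
  have hQnot_pos : ∀ j, 0 < sstar j → q j ∉ Zf j := by
    intro j hj hm
    have h1 := hQeq j
    rw [if_pos hm] at h1
    nlinarith [infDist_nonneg (x := q j) (s := frontier (Zf j))]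
  -- witness points at exact distance
  have hξex : ∀ j, ∃ z ∈ frontier (Zf j), dist (q j) z = r j := by
    intro j
    obtain ⟨z, hz, hdz⟩ := isClosed_frontier.exists_infDist_eq_dist (hZfne j) (q j)
    exact ⟨z, hz, by rw [← hdz, hQD]⟩
  choose ξ hξF hξd using hξex
  have hωex : ∀ i, ∃ z ∈ frontier Z0, dist (p i) z = |s i| := by
    intro i
    obtain ⟨z, hz, hdz⟩ := isClosed_frontier.exists_infDist_eq_dist hZ0ne (p i)
    exact ⟨z, hz, by rw [← hdz, wit_infDist hW0 i]⟩
  choose ω hωF hωd using hωex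
  have hfroint : ∀ (A : Set (EuclideanSpace ℝ (Fin d))) (x : EuclideanSpace ℝ (Fin d)),
      x ∈ frontier A → x ∉ interior A := fun A x hx => hx.2
  -- key: for negative sstar j, the closed ball is inside every witness
  have hqBall : ∀ j, sstar j < 0 → ∀ Z, Wit p s Z → closedBall (q j) (r j) ⊆ Z := by
    intro j hj Z hZ
    have hrpos : 0 < r j := by rw [hrj]; exact abs_pos.mpr (ne_of_lt hj)
    have hqZ : q j ∈ Z := by
      by_contra hq
      have hdistpq : ∀ i, |s i| ≤ dist (p i) (q j) := by
        intro i
        rcases lt_trichotomy (s i) 0 with hlt | heq | hgt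
        · have hcb := wit_closedBall_subset hZ (le_of_lt hlt)
          have hnot : q j ∉ closedBall (p i) (-(s i)) := fun hmem => hq (hcb hmem)
          rw [mem_closedBall, not_le] at hnot
          rw [abs_of_neg hlt, dist_comm]
          linarith
        · rw [heq]; simpa using dist_nonneg
        · rw [abs_of_pos hgt]
          exact wit_dist_of_pos (hWj j) hgt (q j) (hQmem_neg j hj)
      have hZ'c : IsClosed (Z ∪ {q j}) := hZ.1.union isClosed_singleton
      have hqint : q j ∉ interior Z := fun hc => hq (interior_subset hc)
      have hintU : interior (Z ∪ {q j}) = interior Z :=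
        aux_interior_union_of_interior_empty hZ.1
          (aux_interior_finite_empty (Set.finite_singleton _))
      have hfro' : frontier (Z ∪ {q j}) = frontier Z ∪ {q j} := by
        rw [hZ'c.frontier_eq, hintU, hZ.1.frontier_eq]
        ext z
        simp only [Set.mem_diff, Set.mem_union, Set.mem_singleton_iff]
        constructor
        · rintro ⟨hz | hz, hnz⟩
          · exact Or.inl ⟨hz, hnz⟩
          · exact Or.inr hz
        · rintro (⟨hz, hnz⟩ | hz)
          · exact ⟨Or.inl hz, hnz⟩
          · exact ⟨Or.inr hz, by rw [hz]; exact hqint⟩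
      have hne' : (frontier (Z ∪ {q j})).Nonempty := by
        rw [hfro']
        exact hZ.2.1.mono Set.subset_union_left
      have hmemq : q j ∈ Z ∪ {q j} := Or.inr rfl
      have hIDq : infDist (q j) (frontier (Z ∪ {q j})) = 0 := by
        apply le_antisymm
        · have h3 : q j ∈ frontier (Z ∪ {q j}) := by rw [hfro']; exact Or.inr rfl
          have h4 := infDist_le_dist_of_mem (x := q j) h3
          rw [dist_self] at h4
          exact h4
        · exact infDist_nonneg
      have hreal0 : Realizable (Fin.snoc p (q j)) (Fin.snoc s (0:ℝ)) := by
        refine ⟨Z ∪ {q j}, hZ'c, hne', ?_⟩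
        intro i'
        induction i' using Fin.lastCases with
        | last =>
          have e : (Fin.snoc p (q j) : Fin (n+1) → EuclideanSpace ℝ (Fin d)) (Fin.last n)
              = q j := by simp
          have e2 : (Fin.snoc s (0:ℝ) : Fin (n+1) → ℝ) (Fin.last n) = 0 := by simp
          rw [e, e2, if_pos hmemq, hIDq, neg_zero]
        | cast i =>
          have e : (Fin.snoc p (q j) : Fin (n+1) → EuclideanSpace ℝ (Fin d)) i.castSucc
              = p i := by simp
          have e2 : (Fin.snoc s (0:ℝ) : Fin (n+1) → ℝ) i.castSucc = s i := by simp
          rw [e, e2]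
          have hpiq : p i ≠ q j := by
            intro hc
            have h0 : |s i| ≤ 0 := by
              have h4 := hdistpq i; rw [hc, dist_self] at h4; exact h4
            have hs0 : s i = 0 := abs_eq_zero.mp (le_antisymm h0 (abs_nonneg _))
            exact hq (hc ▸ wit_mem_of_nonpos hZ (le_of_eq hs0))
          have hmem_iff : (p i ∈ Z ∪ {q j}) = (p i ∈ Z) := by
            simp only [Set.union_singleton, Set.mem_insert_iff, hpiq, false_or]
          have hID : infDist (p i) (frontier (Z ∪ {q j})) = |s i| := by
            rw [hfro']
            apply le_antisymm
            · calc infDist (p i) (frontier Z ∪ {q j})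
                  ≤ infDist (p i) (frontier Z) :=
                    infDist_le_infDist_of_subset Set.subset_union_left hZ.2.1
                _ = |s i| := wit_infDist hZ i
            · refine aux_le_infDist (hZ.2.1.mono Set.subset_union_left) ?_
              rintro y (hy | hy)
              · rw [← wit_infDist hZ i]; exact infDist_le_dist_of_mem hy
              · rw [Set.mem_singleton_iff] at hy; rw [hy]; exact hdistpq i
          rw [hID, hmem_iff]
          have h1 := hZ.2.2 i
          rw [wit_infDist hZ i] at h1
          exact h1
      have h5 := hmin j 0 hreal0
      rw [abs_zero] at h5
      rw [hrj] at hrpos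
      linarith
    have hball := aux_ball_subset_of_le_infDist hqZ (hminD Z hZ j)
    rw [← closure_ball (q j) (ne_of_gt hrpos)]
    exact closure_minimal hball hZ.1
  -- the joint witness
  set Cc : Fin n → Set (EuclideanSpace ℝ (Fin d)) :=
    fun i => if s i ≤ 0 then closedBall (p i) (-(s i)) else ∅ with hCc
  set Bb : Fin m → Set (EuclideanSpace ℝ (Fin d)) :=
    fun j => if sstar j < 0 then closedBall (q j) (r j) else ∅ with hBb
  set Y : Set (EuclideanSpace ℝ (Fin d)) := (⋃ i, Cc i) ∪ (⋃ j, Bb j) with hY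
  set K : Set (EuclideanSpace ℝ (Fin d)) := frontier Z0 ∪ Set.range ξ with hK
  have hCcClosed : ∀ i, IsClosed (Cc i) := by
    intro i
    by_cases hsi : s i ≤ 0 <;> simp [hCc, hsi, isClosed_closedBall, isClosed_empty]
  have hBbClosed : ∀ j, IsClosed (Bb j) := by
    intro j
    by_cases hsj : sstar j < 0 <;> simp [hBb, hsj, isClosed_closedBall, isClosed_empty]
  have hYclosed : IsClosed Y :=
    (isClosed_iUnion_of_finite hCcClosed).union (isClosed_iUnion_of_finite hBbClosed)
  have hYsub : ∀ Z, Wit p s Z → Y ⊆ Z := by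
    intro Z hZ x hx
    rcases hx with hx | hx
    · rw [Set.mem_iUnion] at hx
      obtain ⟨i, hi⟩ := hx
      by_cases hsi : s i ≤ 0
      · simp only [hCc, if_pos hsi] at hi
        exact wit_closedBall_subset hZ hsi hi
      · simp only [hCc, if_neg hsi] at hi
        exact absurd hi (Set.notMem_empty x)
    · rw [Set.mem_iUnion] at hx
      obtain ⟨j, hj⟩ := hx
      by_cases hsj : sstar j < 0
      · simp only [hBb, if_pos hsj] at hj
        exact hqBall j hsj Z hZ hj
      · simp only [hBb, if_neg hsj] at hj
        exact absurd hj (Set.notMem_empty x)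
  have hKclosed : IsClosed K := isClosed_frontier.union (Set.finite_range ξ).isClosed
  have hKint : interior K = ∅ := by
    rw [hK, aux_interior_union_of_interior_empty isClosed_frontier
      (aux_interior_finite_empty (Set.finite_range ξ))]
    exact interior_frontier hZ0c
  have hintZs : interior (Y ∪ K) = interior Y :=
    aux_interior_union_of_interior_empty hYclosed hKint
  have hintY0 : interior Y ⊆ interior Z0 := interior_mono (hYsub Z0 hW0)
  have hintYj : ∀ j, interior Y ⊆ interior (Zf j) := fun j => interior_mono (hYsub _ (hWj j))
  have hKnotint : ∀ x ∈ K, x ∉ interior Y := by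
    rintro x (hx | hx)
    · exact fun hc => (hfroint Z0 x hx) (hintY0 hc)
    · obtain ⟨j, rfl⟩ := hx
      exact fun hc => (hfroint (Zf j) _ (hξF j)) (hintYj j hc)
  have hfroZs : frontier (Y ∪ K) = (Y \ interior Y) ∪ K := by
    rw [(hYclosed.union hKclosed).frontier_eq, hintZs]
    ext x
    simp only [Set.mem_diff, Set.mem_union]
    constructor
    · rintro ⟨hx | hx, hnx⟩
      · exact Or.inl ⟨hx, hnx⟩
      · exact Or.inr hx
    · rintro (⟨hx, hnx⟩ | hx)
      · exact ⟨Or.inl hx, hnx⟩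
      · exact ⟨Or.inr hx, hKnotint x hx⟩
  have hKsub : K ⊆ frontier (Y ∪ K) := by
    rw [hfroZs]; exact fun z hz => Or.inr hz
  have hFne : (frontier (Y ∪ K)).Nonempty := by
    obtain ⟨z, hz⟩ := hZ0ne
    exact ⟨z, hKsub (Or.inl hz)⟩
  -- distance bounds for all frontier points
  have hFp : ∀ x ∈ frontier (Y ∪ K), ∀ i, |s i| ≤ dist (p i) x := by
    intro x hx i
    rw [hfroZs] at hx
    rcases hx with ⟨hxY, hxint⟩ | hx
    · rcases lt_trichotomy (s i) 0 with hlt | heq | hgt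
      · have hb : ball (p i) (-(s i)) ⊆ interior Y := by
          refine interior_maximal ?_ isOpen_ball
          refine Set.Subset.trans ball_subset_closedBall ?_
          refine Set.Subset.trans ?_ Set.subset_union_left
          refine Set.subset_iUnion_of_subset i ?_
          simp only [hCc, if_pos (le_of_lt hlt)]
          exact Set.Subset.rfl
        have hxb : x ∉ ball (p i) (-(s i)) := fun hc => hxint (hb hc)
        rw [mem_ball', not_lt] at hxb
        rw [abs_of_neg hlt]
        exact hxb
      · rw [heq]; simpa using dist_nonneg
      · rw [abs_of_pos hgt]
        exact wit_dist_of_pos hW0 hgt x (hYsub Z0 hW0 hxY)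
    · rcases hx with hx | hx
      · rw [← wit_infDist hW0 i]; exact infDist_le_dist_of_mem hx
      · obtain ⟨k, rfl⟩ := hx
        rw [← wit_infDist (hWj k) i]; exact infDist_le_dist_of_mem (hξF k)
  have hFq : ∀ x ∈ frontier (Y ∪ K), ∀ j, r j ≤ dist (q j) x := by
    intro x hx j
    rw [hfroZs] at hx
    rcases hx with ⟨hxY, hxint⟩ | hx
    · rcases lt_trichotomy (sstar j) 0 with hlt | heq | hgt
      · have hb : ball (q j) (r j) ⊆ interior Y := by
          refine interior_maximal ?_ isOpen_ball
          refine Set.Subset.trans ball_subset_closedBall ?_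
          refine Set.Subset.trans ?_ Set.subset_union_right
          refine Set.subset_iUnion_of_subset j ?_
          simp only [hBb, if_pos hlt]
          exact Set.Subset.rfl
        have hxb : x ∉ ball (q j) (r j) := fun hc => hxint (hb hc)
        rw [mem_ball', not_lt] at hxb
        exact hxb
      · rw [hrj, heq]; simpa using dist_nonneg
      · have h1 := aux_infDist_frontier_le_right (hQnot_pos j hgt) (hYsub _ (hWj j) hxY)
        rw [hQD j] at h1
        exact h1
    · rcases hx with hx | hx
      · exact le_trans (hminD Z0 hW0 j) (infDist_le_dist_of_mem hx)
      · obtain ⟨k, rfl⟩ := hx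
        exact le_trans (hminD (Zf k) (hWj k) j) (infDist_le_dist_of_mem (hξF k))
  -- conclude
  refine ⟨Y ∪ K, hYclosed.union hKclosed, hFne, ?_⟩
  intro idx
  rcases idx with i | j
  · show s i = @ite ℝ (p i ∈ Y ∪ K) (Classical.propDecidable _) (-infDist (p i) (frontier (Y ∪ K))) (infDist (p i) (frontier (Y ∪ K)))
    have hID : infDist (p i) (frontier (Y ∪ K)) = |s i| := by
      apply le_antisymm
      · rw [← hωd i]
        exact infDist_le_dist_of_mem (hKsub (Or.inl (hωF i)))
      · exact aux_le_infDist hFne (fun y hy => hFp y hy i)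
    by_cases hsi : s i ≤ 0
    · have hmem : p i ∈ Y ∪ K := by
        left; left
        refine Set.mem_iUnion.mpr ⟨i, ?_⟩
        simp only [hCc, if_pos hsi]
        exact mem_closedBall_self (by linarith)
      rw [if_pos hmem, hID, abs_of_nonpos hsi, neg_neg]
    · push_neg at hsi
      have hmem : p i ∉ Y ∪ K := by
        rintro (hc | hc)
        · exact (wit_not_mem_of_pos hW0 hsi) (hYsub Z0 hW0 hc)
        · have h6 := hFp (p i) (hKsub hc) i
          rw [dist_self, abs_of_pos hsi] at h6
          linarith
      rw [if_neg hmem, hID, abs_of_pos hsi]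
  · show sstar j = @ite ℝ (q j ∈ Y ∪ K) (Classical.propDecidable _) (-infDist (q j) (frontier (Y ∪ K))) (infDist (q j) (frontier (Y ∪ K)))
    have hID : infDist (q j) (frontier (Y ∪ K)) = r j := by
      apply le_antisymm
      · rw [← hξd j]
        exact infDist_le_dist_of_mem (hKsub (Or.inr ⟨j, rfl⟩))
      · exact aux_le_infDist hFne (fun y hy => hFq y hy j)
    rcases lt_trichotomy (sstar j) 0 with hlt | heq | hgt
    · have hmem : q j ∈ Y ∪ K := by
        left; right
        refine Set.mem_iUnion.mpr ⟨j, ?_⟩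
        simp only [hBb, if_pos hlt]
        refine mem_closedBall_self ?_
        rw [hrj]
        positivity
      rw [if_pos hmem, hID, hrj, abs_of_neg hlt, neg_neg]
    · have hmem : q j ∈ Y ∪ K := by
        right; right
        refine ⟨j, ?_⟩
        have h7 : dist (ξ j) (q j) = 0 := by
          rw [dist_comm, hξd j, hrj, heq, abs_zero]
        exact dist_eq_zero.mp h7
      rw [if_pos hmem, hID, hrj, heq, abs_zero, neg_zero]
    · have hmem : q j ∉ Y ∪ K := by
        rintro (hc | hc)
        · exact (hQnot_pos j hgt) (hYsub _ (hWj j) hc)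
        · have h8 := hFq (q j) (hKsub hc) j
          rw [dist_self, hrj] at h8
          have h9 : |sstar j| = 0 := le_antisymm h8 (abs_nonneg _)
          rw [abs_eq_zero] at h9
          linarith
      rw [if_neg hmem, hID, hrj, abs_of_pos hgt]
end

section
/- Let (p₁, s₁), …, (pₙ, sₙ) be a geometrically consistent finite family of signed distance samples in ℝ^d, let A = ⋃_{i : sᵢ > 0} B(pᵢ, sᵢ) be the union of the closed balls of the positively-signed samples, let p ∈ A, and set s* = dist(p, ℝ^d \ A). Then there exists a point q with ‖q − p‖ = s* and ‖q − pᵢ‖ ≥ |sᵢ| for all i; that is, the sphere S(p, s*) contains a point not covered by the open ball of any input sample. -/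
/-- Given a geometrically consistent family, a point `pt` in the union `A` of the closed
balls of the positively-signed samples, and `sstar = dist(pt, Aᶜ)`, the sphere
`S(pt, sstar)` has a point not covered by the open ball of any input sample. -/
theorem minimal_sphere_has_uncovered_point (d n : ℕ)
    (p : Fin n → EuclideanSpace ℝ (Fin d)) (s : Fin n → ℝ)
    (h : GeomConsistent p s) (A : Set (EuclideanSpace ℝ (Fin d)))
    (hA : A = ⋃ i : Fin n, ⋃ (_ : 0 < s i), Metric.closedBall (p i) (s i))
    (pt : EuclideanSpace ℝ (Fin d)) (hpt : pt ∈ A) :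
    ∃ q : EuclideanSpace ℝ (Fin d),
      dist q pt = Metric.infDist pt Aᶜ ∧ ∀ i, |s i| ≤ dist q (p i) := by
  classical
  -- find a positive sample whose closed ball contains pt
  obtain ⟨j0, hj0, hptj0⟩ : ∃ j, 0 < s j ∧ pt ∈ Metric.closedBall (p j) (s j) := by
    rw [hA] at hpt; simpa using hpt
  -- the space is nontrivial (otherwise property (ii) for j0 is contradictory)
  rcases subsingleton_or_nontrivial (EuclideanSpace ℝ (Fin d)) with hsub | hnt
  · obtain ⟨q0, hq0, -⟩ := h.2 j0
    have hqq : q0 = p j0 := Subsingleton.elim _ _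
    rw [hqq, dist_self] at hq0
    have : |s j0| > 0 := abs_pos.mpr (ne_of_gt hj0)
    linarith
  -- A is closed
  have hAclosed : IsClosed A := by
    rw [hA]
    refine isClosed_iUnion_of_finite fun i => ?_
    by_cases hi : 0 < s i
    · simpa [hi] using Metric.isClosed_closedBall (x := p i) (ε := s i)
    · simp [hi]
  -- A is bounded
  have hAbdd : Bornology.IsBounded A := by
    rw [hA]
    have heq : (⋃ i : Fin n, ⋃ _ : 0 < s i, Metric.closedBall (p i) (s i))
        = ⋃ i ∈ (Set.univ : Set (Fin n)), ⋃ _ : 0 < s i, Metric.closedBall (p i) (s i) := by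
      simp
    rw [heq]
    refine (Bornology.isBounded_biUnion Set.finite_univ).mpr ?_
    intro i _
    by_cases hi : 0 < s i
    · simpa [hi] using Metric.isBounded_closedBall (x := p i) (r := s i)
    · simp [hi]
  -- hence Aᶜ is nonempty
  have hAc_ne : Aᶜ.Nonempty := by
    by_contra hc
    rw [Set.not_nonempty_iff_eq_empty, Set.compl_empty_iff] at hc
    obtain ⟨R, hR⟩ := hAbdd.subset_closedBall 0
    obtain ⟨x, hx⟩ := exists_norm_eq (EuclideanSpace ℝ (Fin d)) (c := |R| + 1) (by positivity)
    have hxA : x ∈ A := hc ▸ Set.mem_univ x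
    have hle := hR hxA
    rw [Metric.mem_closedBall, dist_zero_right, hx] at hle
    have := le_abs_self R
    linarith
  -- nearest point q in closure Aᶜ
  obtain ⟨q, hqmem, hqd⟩ :=
    (isClosed_closure (s := Aᶜ)).exists_infDist_eq_dist hAc_ne.closure pt
  rw [Metric.infDist_closure] at hqd
  refine ⟨q, by rw [dist_comm]; exact hqd.symm, ?_⟩
  intro i
  rcases lt_trichotomy (s i) 0 with hin | hiz | hip
  · -- negative sample: suppose q is inside its open ball, derive contradiction
    by_contra hcon
    push_neg at hcon
    have hq_ball : q ∈ Metric.ball (p i) |s i| := Metric.mem_ball.mpr hcon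
    -- first, pt ∉ ball (p i) |s i| would also matter; work with sstar := dist pt q
    have hdisj := h.1 j0 i hj0 hin
    rcases eq_or_lt_of_le (dist_nonneg (x := pt) (y := q)) with hz | hpos
    · -- sstar = 0 : pt = q, in closure of positive ball and in negative open ball
      have hpq : pt = q := by
        have : dist pt q = 0 := hz.symm
        exact dist_eq_zero.mp this
      have hptcl : pt ∈ closure (Metric.ball (p j0) (s j0)) := by
        rw [closure_ball (p j0) (ne_of_gt hj0)]; exact hptj0
      obtain ⟨x, hx1, hx2⟩ := mem_closure_iff.mp hptcl (Metric.ball (p i) |s i|)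
        Metric.isOpen_ball (hpq ▸ hq_ball)
      have : x ∈ Metric.ball (p j0) |s j0| := by rwa [abs_of_pos hj0]
      exact Set.disjoint_left.mp hdisj this hx1
    · -- sstar > 0 : the open set ball pt sstar ∩ ball (p i) |s i| is nonempty
      set sstar := dist pt q with hss
      have hqcl : q ∈ closure (Metric.ball pt sstar) := by
        rw [closure_ball pt (ne_of_gt hpos)]
        exact Metric.mem_closedBall.mpr (by rw [dist_comm])
      obtain ⟨x, hx1, hx2⟩ := mem_closure_iff.mp hqcl (Metric.ball (p i) |s i|)
        Metric.isOpen_ball hq_ball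
      set U : Set (EuclideanSpace ℝ (Fin d)) :=
        Metric.ball pt sstar ∩ Metric.ball (p i) |s i| with hU
      have hUopen : IsOpen U := Metric.isOpen_ball.inter Metric.isOpen_ball
      have hUne : U.Nonempty := ⟨x, hx2, hx1⟩
      -- every point of U lies on some positive sphere
      have hUsub : U ⊆ ⋃ j, Metric.sphere (p j) (s j) := by
        rintro y ⟨hy1, hy2⟩
        have hyA : y ∈ A := by
          by_contra hyc
          have h1 : Metric.infDist pt Aᶜ ≤ dist pt y := Metric.infDist_le_dist_of_mem hyc
          have h2 : dist pt y < sstar := by rw [dist_comm]; exact Metric.mem_ball.mp hy1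
          rw [hqd] at h1
          exact absurd (lt_of_le_of_lt h1 h2) (lt_irrefl _)
        rw [hA] at hyA
        simp only [Set.mem_iUnion] at hyA
        obtain ⟨j, hj, hyj⟩ := hyA
        have hdisj' := h.1 j i hj hin
        have hynb : y ∉ Metric.ball (p j) |s j| :=
          fun hyb => Set.disjoint_left.mp hdisj' hyb hy2
        rw [abs_of_pos hj] at hynb
        have : dist y (p j) = s j :=
          le_antisymm (Metric.mem_closedBall.mp hyj) (not_lt.mp (fun hc => hynb (Metric.mem_ball.mpr hc)))
        exact Set.mem_iUnion.mpr ⟨j, this⟩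
      -- measure contradiction: open nonempty set inside a null set
      have h0 : MeasureTheory.volume (⋃ j, Metric.sphere (p j) (s j)) = 0 :=
        MeasureTheory.measure_iUnion_null fun j =>
          MeasureTheory.Measure.addHaar_sphere MeasureTheory.volume (p j) (s j)
      have hpos' : 0 < MeasureTheory.volume U := hUopen.measure_pos MeasureTheory.volume hUne
      have : MeasureTheory.volume U = 0 :=
        le_antisymm ((MeasureTheory.measure_mono hUsub).trans h0.le) zero_le
      rw [this] at hpos'
      exact absurd hpos' (lt_irrefl _)
  · simp [hiz, dist_nonneg]
  · -- positive sample: q is in the closure of the complement of its closed ball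
    have hsub : Aᶜ ⊆ {x | s i ≤ dist x (p i)} := by
      intro x hx
      simp only [Set.mem_setOf_eq]
      by_contra hc
      push_neg at hc
      have : x ∈ A := by
        rw [hA]
        exact Set.mem_iUnion.mpr ⟨i, Set.mem_iUnion.mpr ⟨hip, Metric.mem_closedBall.mpr hc.le⟩⟩
      exact hx this
    have hC : IsClosed {x : EuclideanSpace ℝ (Fin d) | s i ≤ dist x (p i)} :=
      isClosed_le continuous_const (Continuous.dist continuous_id continuous_const)
    have := closure_minimal hsub hC hqmem
    rw [abs_of_pos hip]
    exact this
end

section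
/- Let d = 2 or d = 3, let (p₁, s₁), …, (pₙ, sₙ) be a realizable finite family of signed distance samples in ℝ^d, and let p ∈ ℝ^d. Then the set V = { s ∈ ℝ : the family augmented by the sample (p, s) is realizable } is nonempty and contains an element s* of minimum absolute value, i.e. there exists s* ∈ V with |s*| ≤ |s| for all s ∈ V. -/
open Metric Set

section SDFAux

variable {E : Type*} [NormedAddCommGroup E] [NormedSpace ℝ E]

private lemma le_infDist_of_forall {x : E} {S : Set E} {c : ℝ} (hS : S.Nonempty)
    (h : ∀ y ∈ S, c ≤ dist x y) : c ≤ Metric.infDist x S := by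
  by_contra hc
  push_neg at hc
  obtain ⟨y, hy, hlt⟩ := (Metric.infDist_lt_iff hS).1 hc
  exact absurd (h y hy) (not_le.2 hlt)

private lemma preconn_subset_interior {S Z : Set E} (hS : IsPreconnected S) (hZ : IsClosed Z)
    (hd : ∀ y ∈ S, y ∉ frontier Z) {q : E} (hq : q ∈ S) (hqZ : q ∈ Z) : S ⊆ interior Z := by
  have hsub : S ⊆ interior Z ∪ Zᶜ := by
    intro y hy
    by_cases hyZ : y ∈ Z
    · left
      by_contra hint
      exact hd y hy (by rw [hZ.frontier_eq]; exact ⟨hyZ, hint⟩)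
    · exact Or.inr hyZ
  rcases IsPreconnected.subset_or_subset isOpen_interior hZ.isOpen_compl
      (disjoint_compl_right.mono_left interior_subset) hsub hS with h | h
  · exact h
  · exact absurd hqZ (h hq)

private lemma ball_subset_of_closed {Z : Set E} (hZ : IsClosed Z) {q : E} {r : ℝ}
    (hr : 0 < r) (hq : q ∈ Z) (hfr : ∀ y ∈ Metric.ball q r, y ∉ frontier Z) :
    Metric.ball q r ⊆ interior Z ∧ Metric.closedBall q r ⊆ Z := by
  have hball : Metric.ball q r ⊆ interior Z :=
    preconn_subset_interior (convex_ball q r).isPreconnected hZ hfr (Metric.mem_ball_self hr) hq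
  refine ⟨hball, ?_⟩
  rw [← closure_ball q hr.ne']
  exact (closure_mono hball).trans ((closure_mono interior_subset).trans hZ.closure_eq.subset)

private lemma infDist_frontier_le_dist {Z : Set E} (hZ : IsClosed Z) {a y : E}
    (ha : a ∉ Z) (hy : y ∈ Z) : Metric.infDist a (frontier Z) ≤ dist a y := by
  by_cases hex : ∃ w ∈ segment ℝ a y, w ∈ frontier Z
  · obtain ⟨w, hws, hwf⟩ := hex
    have h1 : Metric.infDist a (frontier Z) ≤ dist a w := Metric.infDist_le_dist_of_mem hwf
    have h2 : dist a w + dist w y = dist a y := dist_add_dist_of_mem_segment hws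
    have h3 : (0:ℝ) ≤ dist w y := dist_nonneg
    linarith
  · push_neg at hex
    have := preconn_subset_interior (convex_segment a y).isPreconnected hZ hex
      (right_mem_segment ℝ a y) hy
    exact absurd (interior_subset (this (left_mem_segment ℝ a y))) ha

variable {ι : Type}

/-- Points at distance at least `|s i|` from every sample. -/
private def sdfK (p : ι → E) (s : ι → ℝ) : Set E := {x | ∀ i, |s i| ≤ dist (p i) x}

/-- Union of the closed balls around negative samples. -/
private def sdfN (p : ι → E) (s : ι → ℝ) : Set E :=
  ⋃ i ∈ {i | s i < 0}, Metric.closedBall (p i) |s i|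

/-- The set of possible frontier points. -/
private def sdfB (p : ι → E) (s : ι → ℝ) : Set E := sdfK p s \ interior (sdfN p s)

private def IsSDFWitness (Z : Set E) (p : ι → E) (s : ι → ℝ) : Prop :=
  IsClosed Z ∧ (frontier Z).Nonempty ∧
    ∀ i, (p i ∈ Z → s i = -Metric.infDist (p i) (frontier Z)) ∧
      (p i ∉ Z → s i = Metric.infDist (p i) (frontier Z))

private lemma IsSDFWitness.infDist_eq {Z : Set E} {p : ι → E} {s : ι → ℝ}
    (hw : IsSDFWitness Z p s) (i : ι) : Metric.infDist (p i) (frontier Z) = |s i| := by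
  rcases hw.2.2 i with ⟨h1, h2⟩
  by_cases hm : p i ∈ Z
  · rw [h1 hm, abs_neg, abs_of_nonneg Metric.infDist_nonneg]
  · rw [h2 hm, abs_of_nonneg Metric.infDist_nonneg]

private lemma sdfN_subset {Z : Set E} {p : ι → E} {s : ι → ℝ}
    (hw : IsSDFWitness Z p s) : sdfN p s ⊆ Z := by
  refine Set.iUnion₂_subset fun i hi => ?_
  have hpos : 0 < |s i| := abs_pos.2 (ne_of_lt hi)
  have hmem : p i ∈ Z := by
    by_contra hm
    have h1 := (hw.2.2 i).2 hm
    have h2 : (0:ℝ) ≤ s i := h1 ▸ Metric.infDist_nonneg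
    exact absurd h2 (not_le.2 hi)
  refine (ball_subset_of_closed hw.1 hpos hmem ?_).2
  intro y hy
  refine Metric.notMem_of_dist_lt_infDist (x := p i) ?_
  rw [hw.infDist_eq i]
  exact Metric.mem_ball'.1 hy

private lemma frontier_subset_sdfB {Z : Set E} {p : ι → E} {s : ι → ℝ}
    (hw : IsSDFWitness Z p s) : frontier Z ⊆ sdfB p s := by
  intro x hx
  constructor
  · intro i
    rw [← hw.infDist_eq i]
    exact Metric.infDist_le_dist_of_mem hx
  · intro hint
    have h1 : interior (sdfN p s) ⊆ interior Z := interior_mono (sdfN_subset hw)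
    have h2 : x ∉ interior Z := by
      rw [hw.1.frontier_eq] at hx; exact hx.2
    exact h2 (h1 hint)

private lemma isClosed_sdfK (p : ι → E) (s : ι → ℝ) : IsClosed (sdfK p s) := by
  rw [sdfK, setOf_forall]
  exact isClosed_iInter fun i =>
    isClosed_le continuous_const (Continuous.dist continuous_const continuous_id)

private lemma isClosed_sdfB (p : ι → E) (s : ι → ℝ) : IsClosed (sdfB p s) :=
  (isClosed_sdfK p s).sdiff isOpen_interior

private lemma isClosed_sdfN [Finite ι] (p : ι → E) (s : ι → ℝ) : IsClosed (sdfN p s) :=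
  Set.Finite.isClosed_biUnion (Set.toFinite _) fun _ _ => Metric.isClosed_closedBall

private lemma exists_witness_frontier [Nontrivial E] [Finite ι] {Z : Set E} {p : ι → E}
    {s : ι → ℝ} (hw : IsSDFWitness Z p s) {b : E} (hb : b ∈ sdfB p s) :
    ∃ Z' : Set E, IsSDFWitness Z' p s ∧ b ∈ frontier Z' := by
  obtain ⟨hbK, hbN⟩ := hb
  simp only [sdfK, mem_setOf_eq] at hbK
  obtain ⟨hZc, hZne, hZeq⟩ := hw
  have hw' : IsSDFWitness Z p s := ⟨hZc, hZne, hZeq⟩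
  by_cases hbZ : b ∈ Z
  · by_cases hbf : b ∈ frontier Z
    · exact ⟨Z, hw', hbf⟩
    · -- `b` is in the interior of `Z`: carve a small hole with boundary avoiding the balls
      have hbint : b ∈ interior Z := by
        by_contra hc
        exact hbf (by rw [hZc.frontier_eq]; exact ⟨hbZ, hc⟩)
      set δ := Metric.infDist b (frontier Z) with hδdef
      have hδ : 0 < δ := (isClosed_frontier.notMem_iff_infDist_pos hZne).1 hbf
      have hballfr : ∀ y ∈ Metric.ball b δ, y ∉ frontier Z := by
        intro y hy
        exact Metric.notMem_of_dist_lt_infDist (x := b) (by rw [dist_comm]; exact hy)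
      have hballint : Metric.ball b δ ⊆ interior Z :=
        (ball_subset_of_closed hZc hδ hbZ hballfr).1
      set N := sdfN p s with hNdef
      have hNc : IsClosed N := isClosed_sdfN p s
      set G := Metric.ball b (δ/2) \ (N ∪ {b}) with hGdef
      have hGo : IsOpen G := Metric.isOpen_ball.sdiff (hNc.union isClosed_singleton)
      have hGcl : closure G ⊆ interior Z := by
        intro y hy
        have h1 : closure G ⊆ Metric.closedBall b (δ/2) :=
          (closure_mono diff_subset).trans Metric.closure_ball_subset_closedBall
        exact hballint (Metric.closedBall_subset_ball (by linarith) (h1 hy))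
      have hGZ : G ⊆ Z := fun y hy => interior_subset (hGcl (subset_closure hy))
      set Z' := Z \ G with hZ'def
      have hZ'c : IsClosed Z' := hZc.sdiff hGo
      have hbG : b ∉ G := fun h => h.2 (Or.inr rfl)
      have hbZ' : b ∈ Z' := ⟨hbZ, hbG⟩
      have hbNb : b ∉ interior (N ∪ {b}) := by
        intro hmem
        apply hbN
        obtain ⟨U, hUZ, hUo, hbU⟩ := mem_interior.1 hmem
        refine mem_interior.2 ⟨U, ?_, hUo, hbU⟩
        intro y hy
        have h2 : y ∈ closure (U ∩ {b}ᶜ) :=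
          (dense_compl_singleton b).open_subset_closure_inter hUo hy
        have h3 : U ∩ {b}ᶜ ⊆ N := by
          rintro z ⟨hz1, hz2⟩
          rcases hUZ hz1 with h | h
          · exact h
          · exact absurd h hz2
        have h4 := (closure_mono h3) h2
        rwa [hNc.closure_eq] at h4
      have hbclG : b ∈ closure G := by
        rw [_root_.mem_closure_iff]
        intro U hUo hbU
        have hb2 : b ∈ closure ((N ∪ {b})ᶜ) := by
          rw [closure_compl]
          exact hbNb
        have h4 := _root_.mem_closure_iff.1 hb2 (U ∩ Metric.ball b (δ/2))
          (hUo.inter Metric.isOpen_ball) ⟨hbU, Metric.mem_ball_self (by linarith)⟩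
        obtain ⟨y, ⟨hyU, hyball⟩, hyN⟩ := h4
        exact ⟨y, hyU, hyball, hyN⟩
      have hfrZ' : frontier Z' ⊆ frontier Z ∪ closure G := by
        intro x hx
        have hx2 : x ∈ frontier (Z ∩ Gᶜ) := by rwa [hZ'def, diff_eq] at hx
        rcases frontier_inter_subset Z Gᶜ hx2 with h | h
        · exact Or.inl h.1
        · rw [frontier_compl] at h
          exact Or.inr (frontier_subset_closure h.2)
      have hfrZsub : frontier Z ⊆ frontier Z' := by
        intro w hw2
        have hwZ : w ∈ Z := hZc.frontier_subset hw2
        have hwint : w ∉ interior Z := by rw [hZc.frontier_eq] at hw2; exact hw2.2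
        have hwZ' : w ∈ Z' := ⟨hwZ, fun hG => hwint (hGcl (subset_closure hG))⟩
        rw [frontier_eq_closure_inter_closure]
        refine ⟨subset_closure hwZ', ?_⟩
        have h5 : w ∈ closure Zᶜ := by
          rw [frontier_eq_closure_inter_closure] at hw2; exact hw2.2
        exact closure_mono (compl_subset_compl.2 diff_subset) h5
      have hbfr' : b ∈ frontier Z' := by
        rw [frontier_eq_closure_inter_closure]
        refine ⟨subset_closure hbZ', ?_⟩
        have hGc : G ⊆ Z'ᶜ := fun y hy hy' => hy'.2 hy
        exact closure_mono hGc hbclG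
      have hZ'ne : (frontier Z').Nonempty := ⟨b, hbfr'⟩
      have hdist : ∀ x ∈ frontier Z', ∀ i, |s i| ≤ dist (p i) x := by
        intro x hx i
        rcases hfrZ' hx with hx1 | hx1
        · rw [← hw'.infDist_eq i]
          exact Metric.infDist_le_dist_of_mem hx1
        · rcases lt_trichotomy (s i) 0 with hs | hs | hs
          · have hsub : Metric.ball (p i) |s i| ⊆ N := by
              intro y hy
              simp only [hNdef, sdfN]
              exact Set.mem_biUnion hs (Metric.ball_subset_closedBall hy)
            have hball : Metric.ball (p i) |s i| ⊆ interior N :=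
              (Metric.isOpen_ball.subset_interior_iff).2 hsub
            have hxN : x ∉ interior N := by
              have h6 : closure G ⊆ (interior N)ᶜ := by
                rw [← closure_compl]
                refine closure_mono ?_
                intro y hy hyN
                exact hy.2 (Or.inl hyN)
              exact h6 hx1
            exact not_lt.1 (fun hlt => hxN (hball (Metric.mem_ball'.2 hlt)))
          · rw [hs, abs_zero]; exact dist_nonneg
          · have hpZ : p i ∉ Z := by
              intro hm
              have h7 := (hZeq i).1 hm
              have h0 : (0:ℝ) ≤ Metric.infDist (p i) (frontier Z) := Metric.infDist_nonneg
              linarith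
            have hxZ : x ∈ Z := interior_subset (hGcl hx1)
            have h8 := infDist_frontier_le_dist hZc hpZ hxZ
            rw [hw'.infDist_eq i] at h8
            exact h8
      have hid : ∀ i, Metric.infDist (p i) (frontier Z') = |s i| := fun i =>
        le_antisymm
          (by rw [← hw'.infDist_eq i]
              exact Metric.infDist_le_infDist_of_subset hfrZsub hZne)
          (le_infDist_of_forall hZ'ne fun y hy => hdist y hy i)
      have hmemG : ∀ i, p i ∉ G := by
        intro i hG
        rcases lt_trichotomy (s i) 0 with hs | hs | hs
        · refine hG.2 (Or.inl ?_)
          simp only [hNdef, sdfN]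
          exact Set.mem_biUnion hs (Metric.mem_closedBall_self (abs_nonneg _))
        · have hpint : p i ∈ interior Z := hGcl (subset_closure hG)
          by_cases hm : p i ∈ Z
          · have h1 := (hZeq i).1 hm
            rw [hs] at h1
            have h2 : Metric.infDist (p i) (frontier Z) = 0 := by linarith
            have h3 : p i ∈ frontier Z := by
              by_contra hc
              have h4 := (isClosed_frontier.notMem_iff_infDist_pos hZne).1 hc
              linarith
            rw [hZc.frontier_eq] at h3
            exact h3.2 hpint
          · exact hm (interior_subset hpint)
        · have hpZ : p i ∉ Z := by
            intro hm
            have h7 := (hZeq i).1 hm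
            have h0 : (0:ℝ) ≤ Metric.infDist (p i) (frontier Z) := Metric.infDist_nonneg
            linarith
          exact hpZ (hGZ hG)
      have hmem : ∀ i, (p i ∈ Z' ↔ p i ∈ Z) := fun i =>
        ⟨fun h => h.1, fun h => ⟨h, hmemG i⟩⟩
      refine ⟨Z', ⟨hZ'c, hZ'ne, fun i => ⟨?_, ?_⟩⟩, hbfr'⟩
      · intro hm
        rw [hid i]
        have h1 := (hZeq i).1 ((hmem i).1 hm)
        rw [hw'.infDist_eq i] at h1
        exact h1
      · intro hm
        rw [hid i]
        have h1 := (hZeq i).2 (fun h => hm ((hmem i).2 h))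
        rw [hw'.infDist_eq i] at h1
        exact h1
  · -- `b` is outside `Z` : add it as an isolated point
    set Z' := Z ∪ {b} with hZ'def
    have hZ'c : IsClosed Z' := hZc.union isClosed_singleton
    have hint : interior Z' = interior Z := by
      refine le_antisymm ?_ (interior_mono subset_union_left)
      intro x hx
      obtain ⟨U, hUZ, hUo, hxU⟩ := mem_interior.1 hx
      have hbU : b ∉ U := by
        intro hbU
        have h2 : U ⊆ closure (U ∩ {b}ᶜ) :=
          (dense_compl_singleton b).open_subset_closure_inter hUo
        have h3 : U ∩ {b}ᶜ ⊆ Z := by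
          rintro z ⟨hz1, hz2⟩
          rcases hUZ hz1 with h | h
          · exact h
          · exact absurd h hz2
        have h4 : b ∈ closure Z := (closure_mono h3) (h2 hbU)
        rw [hZc.closure_eq] at h4
        exact hbZ h4
      refine mem_interior.2 ⟨U, ?_, hUo, hxU⟩
      intro z hz
      rcases hUZ hz with h | h
      · exact h
      · simp only [mem_singleton_iff] at h
        subst h
        exact absurd hz hbU
    have hbint : b ∉ interior Z := fun h => hbZ (interior_subset h)
    have hfr : frontier Z' = frontier Z ∪ {b} := by
      rw [hZ'c.frontier_eq, hint, hZc.frontier_eq]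
      ext z
      constructor
      · rintro ⟨hz1 | hz1, hz2⟩
        · exact Or.inl ⟨hz1, hz2⟩
        · exact Or.inr hz1
      · rintro (⟨hz1, hz2⟩ | hz1)
        · exact ⟨Or.inl hz1, hz2⟩
        · simp only [mem_singleton_iff] at hz1
          subst hz1
          exact ⟨Or.inr rfl, hbint⟩
    have hbfr' : b ∈ frontier Z' := by rw [hfr]; exact Or.inr rfl
    have hZ'ne : (frontier Z').Nonempty := ⟨b, hbfr'⟩
    have hid : ∀ i, Metric.infDist (p i) (frontier Z') = |s i| := by
      intro i
      refine le_antisymm ?_ ?_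
      · rw [← hw'.infDist_eq i]
        exact Metric.infDist_le_infDist_of_subset (by rw [hfr]; exact subset_union_left) hZne
      · refine le_infDist_of_forall hZ'ne ?_
        intro y hy
        rw [hfr] at hy
        rcases hy with hy | hy
        · rw [← hw'.infDist_eq i]
          exact Metric.infDist_le_dist_of_mem hy
        · simp only [mem_singleton_iff] at hy
          subst hy
          exact hbK i
    refine ⟨Z', ⟨hZ'c, hZ'ne, fun i => ⟨?_, ?_⟩⟩, hbfr'⟩
    · intro hm
      rw [hid i]
      rcases hm with hm | hm
      · have h1 := (hZeq i).1 hm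
        rw [hw'.infDist_eq i] at h1
        exact h1
      · simp only [mem_singleton_iff] at hm
        have h0 : s i = 0 := by
          have h9 := hbK i
          rw [← hm, dist_self] at h9
          exact abs_nonpos_iff.1 h9
        rw [h0, abs_zero, neg_zero]
    · intro hm
      rw [hid i]
      have h1 := (hZeq i).2 (fun hh => hm (Or.inl hh))
      rw [hw'.infDist_eq i] at h1
      exact h1

end SDFAux

private lemma realizable_iff_witness {d : ℕ} {ι : Type} (p : ι → EuclideanSpace ℝ (Fin d))
    (s : ι → ℝ) : Realizable p s ↔ ∃ Z, IsSDFWitness Z p s := by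
  constructor
  · rintro ⟨Z, h1, h2, h3⟩
    refine ⟨Z, h1, h2, fun i => ⟨fun hm => ?_, fun hm => ?_⟩⟩
    · rw [h3 i, if_pos hm]
    · rw [h3 i, if_neg hm]
  · rintro ⟨Z, h1, h2, h3⟩
    refine ⟨Z, h1, h2, fun i => ?_⟩
    by_cases hm : p i ∈ Z
    · rw [if_pos hm]; exact (h3 i).1 hm
    · rw [if_neg hm]; exact (h3 i).2 hm

/-- For `d = 2` or `d = 3`, given a realizable family and any new point `pt`, the set of
valid values at `pt` (those making the augmented family realizable) is nonempty and
contains an element of minimum absolute value. -/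
theorem min_valid_value_exists (d : ℕ) (hd : d = 2 ∨ d = 3) (n : ℕ)
    (p : Fin n → EuclideanSpace ℝ (Fin d)) (s : Fin n → ℝ)
    (h : Realizable p s) (pt : EuclideanSpace ℝ (Fin d)) :
    ({v : ℝ | Realizable (Fin.snoc p pt) (Fin.snoc s v)}).Nonempty ∧
    ∃ sstar ∈ {v : ℝ | Realizable (Fin.snoc p pt) (Fin.snoc s v)},
      ∀ v ∈ {v : ℝ | Realizable (Fin.snoc p pt) (Fin.snoc s v)}, |sstar| ≤ |v| := by
  classical
  have hd1 : 0 < d := by rcases hd with h' | h' <;> omega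
  haveI : Nontrivial (EuclideanSpace ℝ (Fin d)) := by
    refine ⟨⟨0, EuclideanSpace.single ⟨0, hd1⟩ 1, fun hcon => ?_⟩⟩
    have := congrArg (fun f => f ⟨0, hd1⟩) hcon.symm
    simp [EuclideanSpace.single_apply] at this
  obtain ⟨Z₀, hw₀⟩ := (realizable_iff_witness p s).1 h
  have mkV : ∀ Z : Set (EuclideanSpace ℝ (Fin d)), IsSDFWitness Z p s →
      (if pt ∈ Z then -Metric.infDist pt (frontier Z) else Metric.infDist pt (frontier Z)) ∈
      {v : ℝ | Realizable (Fin.snoc p pt) (Fin.snoc s v)} := by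
    intro Z hw
    rw [mem_setOf_eq, realizable_iff_witness]
    refine ⟨Z, hw.1, hw.2.1, fun i => ?_⟩
    refine Fin.lastCases ?_ ?_ i
    · simp only [Fin.snoc_last]
      constructor
      · intro hm; rw [if_pos hm]
      · intro hm; rw [if_neg hm]
    · intro j
      simp only [Fin.snoc_castSucc]
      exact hw.2.2 j
  have hne0 := mkV Z₀ hw₀
  refine ⟨⟨_, hne0⟩, ?_⟩
  have hBc : IsClosed (sdfB p s) := isClosed_sdfB p s
  obtain ⟨w0, hw0f⟩ := hw₀.2.1
  have hBne : (sdfB p s).Nonempty := ⟨w0, frontier_subset_sdfB hw₀ hw0f⟩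
  obtain ⟨b, hbB, hbd⟩ := hBc.exists_infDist_eq_dist hBne pt
  obtain ⟨Z', hw', hbfr⟩ := exists_witness_frontier hw₀ hbB
  set v' := if pt ∈ Z' then -Metric.infDist pt (frontier Z')
    else Metric.infDist pt (frontier Z') with hv'
  have hv'V := mkV Z' hw'
  have habs' : |v'| = Metric.infDist pt (frontier Z') := by
    rw [hv']; split_ifs with hm
    · rw [abs_neg]; exact abs_of_nonneg Metric.infDist_nonneg
    · exact abs_of_nonneg Metric.infDist_nonneg
  refine ⟨v', hv'V, ?_⟩
  intro v hv
  rw [mem_setOf_eq, realizable_iff_witness] at hv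
  obtain ⟨Z'', hw''⟩ := hv
  have hw''r : IsSDFWitness Z'' p s := by
    refine ⟨hw''.1, hw''.2.1, fun i => ?_⟩
    have := hw''.2.2 (Fin.castSucc i)
    simpa only [Fin.snoc_castSucc] using this
  have hvval : |v| = Metric.infDist pt (frontier Z'') := by
    have hlast := hw''.2.2 (Fin.last n)
    simp only [Fin.snoc_last] at hlast
    by_cases hm : pt ∈ Z''
    · rw [hlast.1 hm, abs_neg]; exact abs_of_nonneg Metric.infDist_nonneg
    · rw [hlast.2 hm]; exact abs_of_nonneg Metric.infDist_nonneg
  rw [habs', hvval]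
  calc Metric.infDist pt (frontier Z') ≤ dist pt b := Metric.infDist_le_dist_of_mem hbfr
  _ = Metric.infDist pt (sdfB p s) := hbd.symm
  _ ≤ Metric.infDist pt (frontier Z'') :=
      Metric.infDist_le_infDist_of_subset (frontier_subset_sdfB hw''r) hw''.2.1
end

section
/- Let c₁, …, cₙ ∈ ℝ² and r₁, …, rₙ ≥ 0, let A = ⋃ᵢ B(cᵢ, rᵢ) be the union of the closed balls, and let p ∈ A with p ≠ cᵢ for all i. Let q be any point of the closure of ℝ² \ A with ‖p − q‖ = dist(p, ℝ² \ A). Then either there exist an index i and a sign ε ∈ {−1, 1} with q = cᵢ + ε·rᵢ·(p − cᵢ)/‖p − cᵢ‖ (a radial tangent point of the i-th sphere with respect to p), or there exist indices i ≠ j with ‖q − cᵢ‖ = rᵢ and ‖q − cⱼ‖ = rⱼ (an intersection point of two spheres). -/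
open RealInnerProductSpace

private lemma aux_parallel {E : Type*} [NormedAddCommGroup E] [InnerProductSpace ℝ E]
    {a b : E} (ha : a ≠ 0) (H : ∀ h : E, 0 < ⟪a, h⟫ → 0 ≤ ⟪b, h⟫) :
    ∃ l : ℝ, b = l • a := by
  have hna : 0 < ⟪a, a⟫ := by
    rw [real_inner_self_eq_norm_sq]
    have := norm_pos_iff.mpr ha
    positivity
  have horth : ∀ w : E, ⟪a, w⟫ = 0 → 0 ≤ ⟪b, w⟫ := by
    intro w hw
    have key : ∀ ε : ℝ, 0 < ε → -(ε * ⟪b, a⟫) ≤ ⟪b, w⟫ := by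
      intro ε hε
      have h1 : 0 < ⟪a, ε • a + w⟫ := by
        rw [inner_add_right, real_inner_smul_right, hw]
        nlinarith
      have h2 := H _ h1
      rw [inner_add_right, real_inner_smul_right] at h2
      linarith
    by_contra hneg
    push_neg at hneg
    rcases le_or_gt ⟪b, a⟫ 0 with h | h
    · have := key 1 one_pos; linarith
    · have hk := key (-⟪b, w⟫ / (2 * ⟪b, a⟫)) (div_pos (by linarith) (by linarith))
      have : -⟪b, w⟫ / (2 * ⟪b, a⟫) * ⟪b, a⟫ = -⟪b, w⟫ / 2 := by
        field_simp
      rw [this] at hk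
      linarith
  have horth' : ∀ w : E, ⟪a, w⟫ = 0 → ⟪b, w⟫ = 0 := by
    intro w hw
    have h1 := horth w hw
    have h2 := horth (-w) (by rw [inner_neg_right, hw, neg_zero])
    rw [inner_neg_right] at h2
    linarith
  refine ⟨⟪a, b⟫ / ⟪a, a⟫, ?_⟩
  set l := ⟪a, b⟫ / ⟪a, a⟫ with hldef
  have hw : ⟪a, b - l • a⟫ = 0 := by
    rw [inner_sub_right, real_inner_smul_right, hldef]
    field_simp
    ring
  have h0 := horth' _ hw
  have hz : ⟪b - l • a, b - l • a⟫ = 0 := by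
    rw [inner_sub_left, real_inner_smul_left, hw, h0]
    ring
  have := inner_self_eq_zero.mp hz
  exact (sub_eq_zero.mp this)

private lemma aux_tangent {E : Type*} [NormedAddCommGroup E] [InnerProductSpace ℝ E]
    {p q cI : E} {rI δ : ℝ} (hδ : 0 < δ) (hqs : ‖q - cI‖ = rI)
    (H : ∀ x : E, dist x q < δ → rI < dist x cI → dist p q ≤ dist p x)
    (h : E) (hah : 0 < ⟪q - cI, h⟫) : 0 ≤ ⟪q - p, h⟫ := by
  by_contra hb
  push_neg at hb
  have hh : h ≠ 0 := by
    intro h0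
    rw [h0, inner_zero_right] at hah
    exact lt_irrefl 0 hah
  have hhn : 0 < ‖h‖ := norm_pos_iff.mpr hh
  set b := ⟪q - p, h⟫ with hbdef
  set t : ℝ := min (δ / (2 * ‖h‖)) (-b / ‖h‖ ^ 2) with htdef
  have ht0 : 0 < t := lt_min (by positivity) (div_pos (by linarith) (by positivity))
  have ht1 : t * ‖h‖ < δ := by
    calc t * ‖h‖ ≤ δ / (2 * ‖h‖) * ‖h‖ :=
          mul_le_mul_of_nonneg_right (min_le_left _ _) (norm_nonneg h)
      _ = δ / 2 := by field_simp
      _ < δ := by linarith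
  have ht2 : t * ‖h‖ ^ 2 ≤ -b := by
    calc t * ‖h‖ ^ 2 ≤ (-b / ‖h‖ ^ 2) * ‖h‖ ^ 2 :=
          mul_le_mul_of_nonneg_right (min_le_right _ _) (by positivity)
      _ = -b := by field_simp
  set x := q + t • h with hxdef
  have hdx : dist x q < δ := by
    rw [dist_eq_norm]
    have : x - q = t • h := by rw [hxdef]; abel
    rw [this, norm_smul, Real.norm_eq_abs, abs_of_pos ht0]
    exact ht1
  have hrI : 0 ≤ rI := hqs ▸ norm_nonneg _
  have hxc : rI < dist x cI := by
    rw [dist_eq_norm]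
    have hsplit : x - cI = (q - cI) + t • h := by rw [hxdef]; abel
    have hexp : ‖x - cI‖ ^ 2 = rI ^ 2 + (2 * (t * ⟪q - cI, h⟫) + t ^ 2 * ‖h‖ ^ 2) := by
      rw [hsplit, norm_add_sq_real, real_inner_smul_right, norm_smul, Real.norm_eq_abs, hqs]
      rw [mul_pow, sq_abs]
      ring
    nlinarith [norm_nonneg (x - cI)]
  have hle := H x hdx hxc
  have hexp2 : dist p x ^ 2 = dist p q ^ 2 + (2 * (t * b) + t ^ 2 * ‖h‖ ^ 2) := by
    rw [dist_comm p x, dist_comm p q, dist_eq_norm, dist_eq_norm]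
    have hsplit : x - p = (q - p) + t • h := by rw [hxdef]; abel
    rw [hsplit, norm_add_sq_real, real_inner_smul_right, norm_smul, Real.norm_eq_abs]
    rw [mul_pow, sq_abs, hbdef]
    ring
  have hsq : dist p q ^ 2 ≤ dist p x ^ 2 := by
    have := dist_nonneg (x := p) (y := q)
    nlinarith
  nlinarith

/-- The closest point to `p` on the contour of a finite union of closed balls in `ℝ²` is
either a radial tangent point of one of the balls (with respect to `p`) or an
intersection point of two of the spheres. -/
theorem closest_contour_point_tangent_or_intersection (n : ℕ)
    (c : Fin n → EuclideanSpace ℝ (Fin 2)) (r : Fin n → ℝ) (hr : ∀ i, 0 ≤ r i)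
    (A : Set (EuclideanSpace ℝ (Fin 2)))
    (hA : A = ⋃ i : Fin n, Metric.closedBall (c i) (r i))
    (p : EuclideanSpace ℝ (Fin 2)) (hp : p ∈ A) (hpc : ∀ i, p ≠ c i)
    (q : EuclideanSpace ℝ (Fin 2)) (hq : q ∈ closure Aᶜ)
    (hdist : dist p q = Metric.infDist p Aᶜ) :
    (∃ i : Fin n, ∃ ε : ℝ, (ε = 1 ∨ ε = -1) ∧
        q = c i + ((ε * r i) / ‖p - c i‖) • (p - c i)) ∨
    (∃ i j : Fin n, i ≠ j ∧ dist q (c i) = r i ∧ dist q (c j) = r j) := by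
  classical
  have hAclosed : IsClosed A := by
    rw [hA]
    exact isClosed_iUnion_of_finite fun i => Metric.isClosed_closedBall
  -- every sphere constraint: q is not inside any open ball
  have hge : ∀ j, r j ≤ dist q (c j) := by
    intro j
    by_contra hlt
    push_neg at hlt
    have hqball : q ∈ Metric.ball (c j) (r j) := Metric.mem_ball.mpr hlt
    obtain ⟨y, hy1, hy2⟩ := _root_.mem_closure_iff.mp hq _ Metric.isOpen_ball hqball
    exact hy2 (hA ▸ Set.mem_iUnion.mpr ⟨j, Metric.ball_subset_closedBall hy1⟩)
  -- q belongs to A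
  have hqA : q ∈ A := by
    by_contra hqA
    have hopen : IsOpen Aᶜ := hAclosed.isOpen_compl
    obtain ⟨δ, hδ, hball⟩ := Metric.isOpen_iff.mp hopen q hqA
    have hpq : p ≠ q := fun h => hqA (h ▸ hp)
    have hD : 0 < dist p q := dist_pos.mpr hpq
    set t : ℝ := min (δ / (2 * dist p q)) (1 / 2) with htdef
    have ht0 : 0 < t := lt_min (by positivity) (by norm_num)
    have ht2 : t ≤ 1 / 2 := min_le_right _ _
    set q' := q + t • (p - q) with hq'def
    have hq'q : dist q' q = t * dist p q := by
      rw [dist_eq_norm]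
      have : q' - q = t • (p - q) := by rw [hq'def]; abel
      rw [this, norm_smul, Real.norm_eq_abs, abs_of_pos ht0, dist_eq_norm]
    have hq'mem : q' ∈ Aᶜ := by
      apply hball
      rw [Metric.mem_ball, hq'q]
      calc t * dist p q ≤ δ / (2 * dist p q) * dist p q :=
            mul_le_mul_of_nonneg_right (min_le_left _ _) dist_nonneg
        _ = δ / 2 := by field_simp
        _ < δ := by linarith
    have hle := Metric.infDist_le_dist_of_mem (x := p) hq'mem
    have hdq' : dist p q' = (1 - t) * dist p q := by
      rw [dist_eq_norm, dist_eq_norm]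
      have : p - q' = (1 - t) • (p - q) := by rw [hq'def]; module
      rw [this, norm_smul, Real.norm_eq_abs, abs_of_pos (by linarith : (0:ℝ) < 1 - t)]
    rw [hdq'] at hle
    rw [← hdist] at hle
    nlinarith
  -- pick sphere containing q
  obtain ⟨i, hi⟩ := Set.mem_iUnion.mp (hA ▸ hqA)
  have hieq : dist q (c i) = r i := le_antisymm (Metric.mem_closedBall.mp hi) (hge i)
  by_cases hcase : ∃ j, j ≠ i ∧ dist q (c j) = r j
  · obtain ⟨j, hji, hj⟩ := hcase
    exact Or.inr ⟨i, j, Ne.symm hji, hieq, hj⟩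
  push_neg at hcase
  have hstrict : ∀ j, j ≠ i → r j < dist q (c j) :=
    fun j hj => lt_of_le_of_ne (hge j) (fun h => hcase j hj h.symm)
  left
  by_cases hri : r i = 0
  · refine ⟨i, 1, Or.inl rfl, ?_⟩
    have hq0 : q = c i := by
      have : dist q (c i) = 0 := by rw [hieq, hri]
      exact dist_eq_zero.mp this
    simp [hq0, hri]
  have hri' : 0 < r i := lt_of_le_of_ne (hr i) (Ne.symm hri)
  -- neighborhood avoiding other balls
  set F : Set (EuclideanSpace ℝ (Fin 2)) :=
    ⋃ j : {j : Fin n // j ≠ i}, Metric.closedBall (c j) (r j) with hFdef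
  have hFclosed : IsClosed F :=
    isClosed_iUnion_of_finite fun j => Metric.isClosed_closedBall
  have hqF : q ∉ F := by
    intro hmem
    obtain ⟨j, hj⟩ := Set.mem_iUnion.mp hmem
    exact absurd (Metric.mem_closedBall.mp hj) (not_le.mpr (hstrict j j.2))
  obtain ⟨δ, hδ, hball⟩ := Metric.isOpen_iff.mp hFclosed.isOpen_compl q hqF
  have H : ∀ x, dist x q < δ → r i < dist x (c i) → dist p q ≤ dist p x := by
    intro x hx1 hx2
    have hxA : x ∈ Aᶜ := by
      intro hxA
      obtain ⟨j, hj⟩ := Set.mem_iUnion.mp (hA ▸ hxA)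
      by_cases hji : j = i
      · rw [hji] at hj
        exact absurd (Metric.mem_closedBall.mp hj) (not_le.mpr hx2)
      · exact hball (Metric.mem_ball.mpr hx1) (Set.mem_iUnion.mpr ⟨⟨j, hji⟩, hj⟩)
    rw [hdist]
    exact Metric.infDist_le_dist_of_mem hxA
  have hqs : ‖q - c i‖ = r i := by rw [← dist_eq_norm]; exact hieq
  have ha : q - c i ≠ 0 := by
    intro h0
    rw [h0, norm_zero] at hqs
    exact hri hqs.symm
  have Hlin : ∀ h, 0 < ⟪q - c i, h⟫ → 0 ≤ ⟪q - p, h⟫ :=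
    fun h hah => aux_tangent hδ hqs H h hah
  obtain ⟨l, hl⟩ := aux_parallel ha Hlin
  have hpc' : p - c i = (1 - l) • (q - c i) := by
    have step : p - c i = (q - c i) - (q - p) := by abel
    rw [step, hl]
    module
  set μ := 1 - l with hμdef
  have hμ : μ ≠ 0 := by
    intro h0
    apply hpc i
    have : p - c i = 0 := by rw [hpc', h0, zero_smul]
    exact sub_eq_zero.mp this
  have hnorm : ‖p - c i‖ = |μ| * r i := by
    rw [hpc', norm_smul, Real.norm_eq_abs, hqs]
  refine ⟨i, if 0 < μ then 1 else -1, by split <;> simp, ?_⟩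
  have hcoef : ((if 0 < μ then (1:ℝ) else -1) * r i) / ‖p - c i‖ = 1 / μ := by
    rw [hnorm]
    split_ifs with hpos
    · rw [abs_of_pos hpos]
      rw [div_eq_div_iff (by positivity) hμ]
      ring
    · have hneg : μ < 0 := lt_of_le_of_ne (not_lt.mp hpos) hμ
      rw [abs_of_neg hneg]
      rw [div_eq_div_iff (by nlinarith) hμ]
      ring
  rw [hcoef]
  have hsm : (1 / μ) • (p - c i) = q - c i := by
    rw [hpc', smul_smul, one_div, inv_mul_cancel₀ hμ, one_smul]
  rw [hsm]
  abel
end
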